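/- arXiv:0904.0315 — 7 statements merged into one kernel-verified Lean document; each statement's English description precedes it below -/
import Mathlib

section
/- Let f : ℝ → ℝ solve the power-law ODE on [0,T) (0 < T ≤ ∞). Then the energy function E(t) = (n/(n+1))·|f''(t)|^{n+1} − (m/3)·(f'(t))³ is differentiable on [0,T) and satisfies E'(t) = −α·f(t)·(f''(t))² for every t ∈ [0,T). In particular, E is nonincreasing on any subinterval of [0,T) on which f ≥ 0 (assuming α > 0). -/
open Real Set Filter Topology

/-- The signed power nonlinearity `x ↦ |x|^(n-1) * x`. -/
noncomputable def powLaw (n x : ℝ) : ℝ := |x| ^ (n - 1) * x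

/-- `f` solves the power-law ODE `(|f''|^(n-1) f'')' + α f f'' - m (f')² = 0` on `I`:
`f` is twice continuously differentiable on `I`, `t ↦ |f''(t)|^(n-1) f''(t)` is
differentiable on `I`, and the equation holds on `I`. -/
def SolvesPowerLawODE (n α m : ℝ) (f : ℝ → ℝ) (I : Set ℝ) : Prop :=
  (∀ t ∈ I, DifferentiableAt ℝ f t) ∧
  (∀ t ∈ I, DifferentiableAt ℝ (deriv f) t) ∧
  ContinuousOn (deriv (deriv f)) I ∧
  (∀ t ∈ I, DifferentiableAt ℝ (fun s => powLaw n (deriv (deriv f) s)) t) ∧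
  (∀ t ∈ I, deriv (fun s => powLaw n (deriv (deriv f) s)) t
      + α * f t * deriv (deriv f) t - m * (deriv f t) ^ 2 = 0)

lemma powLaw_abs {n : ℝ} (hn : 1 < n) (y : ℝ) : |powLaw n y| = |y| ^ n := by
  rcases eq_or_ne y 0 with rfl | hy
  · simp [powLaw, Real.zero_rpow (by linarith : n - 1 ≠ 0), Real.zero_rpow (by linarith : n ≠ 0)]
  · have h0 : (0:ℝ) < |y| := abs_pos.2 hy
    rw [powLaw, abs_mul, abs_of_nonneg (Real.rpow_nonneg (abs_nonneg y) _),
      ← Real.rpow_add_one (ne_of_gt h0)]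
    ring_nf

lemma abs_powLaw_rpow {n : ℝ} (hn : 1 < n) (y : ℝ) :
    |powLaw n y| ^ ((n + 1) / n) = |y| ^ (n + 1) := by
  have hn0 : n ≠ 0 := by linarith
  rw [powLaw_abs hn, ← Real.rpow_mul (abs_nonneg y)]
  congr 1
  field_simp

lemma powLaw_deriv_eq {n : ℝ} (hn : 1 < n) (y : ℝ) :
    (n + 1) / n * |powLaw n y| ^ ((n + 1) / n - 2) * powLaw n y = (n + 1) / n * y := by
  rcases eq_or_ne y 0 with rfl | hy
  · simp [powLaw, Real.zero_rpow (by linarith : n - 1 ≠ 0)]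
  · have h0 : (0:ℝ) < |y| := abs_pos.2 hy
    have hn0 : n ≠ 0 := by linarith
    rw [powLaw_abs hn, ← Real.rpow_mul (abs_nonneg y)]
    have he : n * ((n + 1) / n - 2) = 1 - n := by field_simp; ring
    rw [he, powLaw]
    rw [show (1 : ℝ) - n = -(n-1) by ring, Real.rpow_neg (abs_nonneg y)]
    have hne : |y| ^ (n - 1) ≠ 0 := ne_of_gt (Real.rpow_pos_of_pos h0 _)
    field_simp

theorem stmt_1 (n α m : ℝ) (hn : 1 < n) (T : EReal) (hT : 0 < T)
    (f : ℝ → ℝ)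
    (hf : SolvesPowerLawODE n α m f {t : ℝ | 0 ≤ t ∧ (t : EReal) < T}) :
    (∀ t : ℝ, 0 ≤ t → (t : EReal) < T →
      HasDerivWithinAt
        (fun s => n / (n + 1) * |deriv (deriv f) s| ^ (n + 1) - m / 3 * (deriv f s) ^ 3)
        (-α * f t * (deriv (deriv f) t) ^ 2)
        {t : ℝ | 0 ≤ t ∧ (t : EReal) < T} t) ∧
    (0 < α → ∀ t₁ t₂ : ℝ, 0 ≤ t₁ → (t₁ : EReal) < T → 0 ≤ t₂ → (t₂ : EReal) < T →
      t₁ ≤ t₂ → (∀ s ∈ Set.Icc t₁ t₂, 0 ≤ f s) →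
      n / (n + 1) * |deriv (deriv f) t₂| ^ (n + 1) - m / 3 * (deriv f t₂) ^ 3
        ≤ n / (n + 1) * |deriv (deriv f) t₁| ^ (n + 1) - m / 3 * (deriv f t₁) ^ 3) := by
  set I : Set ℝ := {t : ℝ | 0 ≤ t ∧ (t : EReal) < T} with hI
  set u : ℝ → ℝ := deriv (deriv f) with hu
  set g : ℝ → ℝ := fun s => powLaw n (u s) with hg
  set E : ℝ → ℝ := fun s => n / (n + 1) * |u s| ^ (n + 1) - m / 3 * (deriv f s) ^ 3 with hE
  have hn0 : n ≠ 0 := by linarith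
  have hn1 : n + 1 ≠ 0 := by linarith
  have hp : (1 : ℝ) < (n + 1) / n := by
    rw [lt_div_iff₀ (by linarith : (0:ℝ) < n)]; linarith
  have key : ∀ t : ℝ, 0 ≤ t → (t : EReal) < T →
      HasDerivAt E (-α * f t * (u t) ^ 2) t := by
    intro t ht0 htT
    have htI : t ∈ I := ⟨ht0, htT⟩
    -- derivative of |u|^(n+1) part
    have hgd : HasDerivAt g (deriv g t) t := (hf.2.2.2.1 t htI).hasDerivAt
    have h1 : HasDerivAt (fun x : ℝ => |x| ^ ((n + 1) / n))
        ((n + 1) / n * |g t| ^ ((n + 1) / n - 2) * g t) (g t) :=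
      hasDerivAt_abs_rpow (g t) hp
    have h2 : HasDerivAt (fun s => |g s| ^ ((n + 1) / n))
        ((n + 1) / n * |g t| ^ ((n + 1) / n - 2) * g t * deriv g t) t := h1.comp t hgd
    have heq : (fun s => |g s| ^ ((n + 1) / n)) = fun s => |u s| ^ (n + 1) := by
      funext s; exact abs_powLaw_rpow hn (u s)
    have h3 : HasDerivAt (fun s => |u s| ^ (n + 1))
        ((n + 1) / n * u t * deriv g t) t := by
      rw [← heq]
      convert h2 using 1
      rw [powLaw_deriv_eq hn (u t)]
    -- derivative of (f')³ part
    have hf' : HasDerivAt (deriv f) (u t) t := (hf.2.1 t htI).hasDerivAt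
    have h4 : HasDerivAt (fun s => (deriv f s) ^ 3) (3 * (deriv f t) ^ 2 * u t) t := by
      simpa using hf'.fun_pow 3
    have h5 : HasDerivAt E
        (n / (n + 1) * ((n + 1) / n * u t * deriv g t) - m / 3 * (3 * (deriv f t) ^ 2 * u t)) t :=
      (h3.const_mul (n / (n + 1))).sub (h4.const_mul (m / 3))
    have hode := hf.2.2.2.2 t htI
    have hdg : deriv g t = m * (deriv f t) ^ 2 - α * f t * u t := by
      simp only [hg, hu] at hode ⊢; linarith
    convert h5 using 1
    rw [hdg]
    field_simp
    ring
  constructor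
  · intro t ht0 htT
    exact (key t ht0 htT).hasDerivWithinAt
  · intro hα t₁ t₂ h10 h1T h20 h2T h12 hfnn
    have hsub : Icc t₁ t₂ ⊆ I := fun s hs =>
      ⟨le_trans h10 hs.1, lt_of_le_of_lt (EReal.coe_le_coe_iff.mpr hs.2) h2T⟩
    have hmono : AntitoneOn E (Icc t₁ t₂) := by
      apply antitoneOn_of_deriv_nonpos (convex_Icc t₁ t₂)
      · intro s hs
        have hsI := hsub hs
        exact (key s hsI.1 hsI.2).continuousAt.continuousWithinAt
      · rw [interior_Icc]
        intro s hs
        exact ((key s (hsub (Ioo_subset_Icc_self hs)).1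
          (hsub (Ioo_subset_Icc_self hs)).2).differentiableAt).differentiableWithinAt
      · rw [interior_Icc]
        intro s hs
        have hsI := hsub (Ioo_subset_Icc_self hs)
        rw [(key s hsI.1 hsI.2).deriv]
        have : 0 ≤ α * f s * (u s) ^ 2 :=
          mul_nonneg (mul_nonneg hα.le (hfnn s (Ioo_subset_Icc_self hs))) (sq_nonneg _)
        linarith
    exact hmono (left_mem_Icc.2 h12) (right_mem_Icc.2 h12) h12
end

section
/- Assume α > 0 and −α < m < 0. Let f : ℝ → ℝ solve the power-law ODE on [0,T) with f'(0) = b ≥ 0, and suppose there exists t₀ ∈ (0,T) such that f''(t) > 0 for all t ∈ (0,t₀) and f''(t₀) = 0. Then f is three times differentiable on (0,t₀) and the third derivative f''' is unbounded on (0,t₀); in particular f is not a classical C³ solution up to t₀. -/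
open Real Set Filter Topology

theorem stmt_3 (n α m : ℝ) (hn : 1 < n) (hα : 0 < α) (hm₁ : -α < m) (hm₂ : m < 0)
    (T : EReal) (hT : 0 < T) (f : ℝ → ℝ) (b : ℝ) (hb : 0 ≤ b)
    (hf : SolvesPowerLawODE n α m f {t : ℝ | 0 ≤ t ∧ (t : EReal) < T})
    (hb0 : deriv f 0 = b)
    (t₀ : ℝ) (ht₀ : 0 < t₀) (ht₀T : (t₀ : EReal) < T)
    (hpos : ∀ t ∈ Set.Ioo 0 t₀, 0 < deriv (deriv f) t)
    (hzero : deriv (deriv f) t₀ = 0) :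
    (∀ t ∈ Set.Ioo 0 t₀, DifferentiableAt ℝ (deriv (deriv f)) t) ∧
    (∀ C : ℝ, ∃ t ∈ Set.Ioo 0 t₀, C < |deriv (deriv (deriv f)) t|) := by
  obtain ⟨hd1, hd2, hc2, hdg, hode⟩ := hf
  set I : Set ℝ := {t : ℝ | 0 ≤ t ∧ (t : EReal) < T} with hI
  have hIccI : Icc 0 t₀ ⊆ I := by
    intro t ht
    refine ⟨ht.1, lt_of_le_of_lt ?_ ht₀T⟩
    exact_mod_cast ht.2
  have hIooI : Ioo 0 t₀ ⊆ I := fun t ht => hIccI ⟨ht.1.le, ht.2.le⟩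
  have ht₀I : t₀ ∈ I := hIccI ⟨ht₀.le, le_refl _⟩
  have h0I : (0 : ℝ) ∈ I := hIccI ⟨le_refl _, ht₀.le⟩
  have hn0 : n ≠ 0 := by linarith
  -- key lemma : differentiability of f'' on Ioo and formula for deriv g
  have key : ∀ t ∈ Ioo 0 t₀, DifferentiableAt ℝ (deriv (deriv f)) t ∧
      deriv (fun s => powLaw n (deriv (deriv f) s)) t
        = deriv (deriv (deriv f)) t * n * (deriv (deriv f) t) ^ (n - 1) := by
    intro t ht
    have htI : t ∈ I := hIooI ht
    have hcont : ContinuousAt (deriv (deriv f)) t :=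
      (hc2 t htI).continuousAt (Filter.mem_of_superset (isOpen_Ioo.mem_nhds ht) hIooI)
    have hptt : 0 < deriv (deriv f) t := hpos t ht
    have hev : ∀ᶠ s in 𝓝 t, 0 < deriv (deriv f) s :=
      hcont.eventually (eventually_gt_nhds hptt)
    -- g = (f'')^n near t
    have heqg : (fun s => powLaw n (deriv (deriv f) s)) =ᶠ[𝓝 t]
        fun s => (deriv (deriv f) s) ^ n := by
      filter_upwards [hev] with s hs
      unfold powLaw
      rw [abs_of_pos hs]
      nth_rewrite 2 [← Real.rpow_one (deriv (deriv f) s)]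
      rw [← Real.rpow_add hs]
      norm_num
    have hgdiff : DifferentiableAt ℝ (fun s => (deriv (deriv f) s) ^ n) t :=
      (hdg t htI).congr_of_eventuallyEq heqg.symm
    -- f'' = (g)^(1/n) near t, so f'' is differentiable at t
    have hGt : (0:ℝ) < (deriv (deriv f) t) ^ n := Real.rpow_pos_of_pos hptt n
    have hev2 : deriv (deriv f) =ᶠ[𝓝 t]
        fun s => ((deriv (deriv f) s) ^ n) ^ (1/n) := by
      filter_upwards [hev] with s hs
      rw [← Real.rpow_mul hs.le, mul_one_div, div_self hn0, Real.rpow_one]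
    have hdiff2 : DifferentiableAt ℝ (deriv (deriv f)) t := by
      refine DifferentiableAt.congr_of_eventuallyEq ?_ hev2
      exact hgdiff.rpow_const (Or.inl hGt.ne')
    refine ⟨hdiff2, ?_⟩
    have hder : HasDerivAt (fun s => (deriv (deriv f) s) ^ n)
        (deriv (deriv (deriv f)) t * n * (deriv (deriv f) t) ^ (n - 1)) t :=
      hdiff2.hasDerivAt.rpow_const (Or.inl hptt.ne')
    calc deriv (fun s => powLaw n (deriv (deriv f) s)) t
        = deriv (fun s => (deriv (deriv f) s) ^ n) t := heqg.deriv_eq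
      _ = _ := hder.deriv
  refine ⟨fun t ht => (key t ht).1, ?_⟩
  -- f' is strictly monotone on Icc 0 t₀
  have hmono : StrictMonoOn (deriv f) (Icc 0 t₀) := by
    refine strictMonoOn_of_deriv_pos (convex_Icc 0 t₀) ?_ ?_
    · exact fun x hx => ((hd2 x (hIccI hx)).continuousAt).continuousWithinAt
    · intro x hx
      rw [interior_Icc] at hx
      exact hpos x hx
  have hP : 0 < deriv f t₀ := by
    have := hmono (left_mem_Icc.mpr ht₀.le) (right_mem_Icc.mpr ht₀.le) ht₀
    rw [hb0] at this
    linarith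
  set P := deriv f t₀ with hPdef
  set K := -m * P ^ 2 with hK
  have hKpos : 0 < K := by
    have : 0 < P ^ 2 := pow_pos hP 2
    nlinarith
  -- the ODE expression for deriv g on I
  have hφ : ∀ t ∈ I, deriv (fun s => powLaw n (deriv (deriv f) s)) t
      = m * (deriv f t) ^ 2 - α * f t * deriv (deriv f) t := by
    intro t htI
    have := hode t htI
    linarith
  intro C
  -- work in the left-neighborhood filter at t₀
  have hIoo_mem : Ioo 0 t₀ ∈ 𝓝[<] t₀ := by
    rw [mem_nhdsWithin]
    exact ⟨Ioi 0, isOpen_Ioi, ht₀, fun x hx => ⟨hx.1, hx.2⟩⟩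
  have hle : 𝓝[<] t₀ ≤ 𝓝[I] t₀ :=
    nhdsWithin_le_of_mem (Filter.mem_of_superset hIoo_mem hIooI)
  have htend2 : Tendsto (deriv (deriv f)) (𝓝[<] t₀) (𝓝 0) := by
    have := (hc2 t₀ ht₀I).tendsto
    rw [hzero] at this
    exact this.mono_left hle
  have htendφ : Tendsto (fun t => m * (deriv f t) ^ 2 - α * f t * deriv (deriv f) t)
      (𝓝[<] t₀) (𝓝 (-K)) := by
    have h1 : Tendsto (deriv f) (𝓝[<] t₀) (𝓝 P) :=
      ((hd2 t₀ ht₀I).continuousAt.tendsto).mono_left nhdsWithin_le_nhds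
    have h0 : Tendsto f (𝓝[<] t₀) (𝓝 (f t₀)) :=
      ((hd1 t₀ ht₀I).continuousAt.tendsto).mono_left nhdsWithin_le_nhds
    have : Tendsto (fun t => m * (deriv f t) ^ 2 - α * f t * deriv (deriv f) t)
        (𝓝[<] t₀) (𝓝 (m * P ^ 2 - α * f t₀ * 0)) :=
      ((h1.pow 2).const_mul m).sub (((h0.const_mul α).mul htend2))
    simpa [hK] using this
  -- (f'')^(n-1) tends to 0
  have htendp : Tendsto (fun t => (deriv (deriv f) t) ^ (n - 1)) (𝓝[<] t₀) (𝓝 0) := by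
    have hc : ContinuousAt (fun x : ℝ => x ^ (n - 1)) 0 :=
      Real.continuousAt_rpow_const 0 (n - 1) (Or.inr (by linarith))
    have := hc.tendsto.comp htend2
    simpa [Function.comp_def, Real.zero_rpow (show n - 1 ≠ 0 by intro h; linarith)] using this
    -- value at 0 is 0
  set D := |C| + 1 with hD
  have hDpos : 0 < D := by positivity
  have hev1 : ∀ᶠ t in 𝓝[<] t₀,
      K / 2 < |m * (deriv f t) ^ 2 - α * f t * deriv (deriv f) t| := by
    have : ∀ᶠ t in 𝓝[<] t₀,
        m * (deriv f t) ^ 2 - α * f t * deriv (deriv f) t < -K / 2 := by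
      apply htendφ.eventually_lt_const
      linarith
    filter_upwards [this] with t htt
    rw [abs_of_neg (by linarith)]
    linarith
  have hev2 : ∀ᶠ t in 𝓝[<] t₀,
      (deriv (deriv f) t) ^ (n - 1) < K / 2 / (n * D) := by
    apply htendp.eventually_lt_const
    positivity
  have hmem : ∀ᶠ t in 𝓝[<] t₀, t ∈ Ioo 0 t₀ := eventually_mem_set.2 hIoo_mem
  obtain ⟨t, ht, hA, hB⟩ := (hmem.and (hev1.and hev2)).exists
  refine ⟨t, ht, ?_⟩
  obtain ⟨hdiff, hform⟩ := key t ht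
  have hgt : deriv (fun s => powLaw n (deriv (deriv f) s)) t
      = m * (deriv f t) ^ 2 - α * f t * deriv (deriv f) t := hφ t (hIooI ht)
  have hppos : 0 < (deriv (deriv f) t) ^ (n - 1) :=
    Real.rpow_pos_of_pos (hpos t ht) _
  -- |f''' t| * (n * p) = |deriv g t| > K/2, and n * p * D < K/2
  have h1 : K / 2 < |deriv (deriv (deriv f)) t| * (n * (deriv (deriv f) t) ^ (n - 1)) := by
    have : |deriv (fun s => powLaw n (deriv (deriv f) s)) t|
        = |deriv (deriv (deriv f)) t| * (n * (deriv (deriv f) t) ^ (n - 1)) := by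
      rw [hform, abs_mul, abs_mul, abs_of_pos (show (0:ℝ) < n by linarith),
        abs_of_pos hppos]
      ring
    rw [← this, hgt]
    exact hA
  have h2 : n * (deriv (deriv f) t) ^ (n - 1) * D < K / 2 := by
    have hnpos : (0:ℝ) < n := by linarith
    calc n * (deriv (deriv f) t) ^ (n - 1) * D
        < n * (K / 2 / (n * D)) * D := by
          apply mul_lt_mul_of_pos_right _ hDpos
          exact mul_lt_mul_of_pos_left hB hnpos
      _ = K / 2 := by field_simp
  have hnp : 0 < n * (deriv (deriv f) t) ^ (n - 1) := by positivity
  have hfin : D < |deriv (deriv (deriv f)) t| := by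
    by_contra h
    push_neg at h
    have : |deriv (deriv (deriv f)) t| * (n * (deriv (deriv f) t) ^ (n - 1))
        ≤ D * (n * (deriv (deriv f) t) ^ (n - 1)) :=
      mul_le_mul_of_nonneg_right h hnp.le
    nlinarith
  calc C ≤ |C| := le_abs_self C
    _ < D := by simp [hD]
    _ < _ := hfin
end

section
/- Assume α > 0 and −α < m < 0. Let a ≥ 0, b ≥ 0 and d ∈ ℝ with |d|^{n−1}·d > −α·a·b, and let f : ℝ → ℝ solve the power-law ODE on [0,T) (0 < T ≤ ∞) with f(0) = a, f'(0) = b, f''(0) = d. Then f(t) > 0 and f'(t) > 0 for all t ∈ (0,T), and both f' and f'' are bounded on [0,T). -/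
open Real Set Filter Topology

lemma powLaw_nonpos {n x : ℝ} (hx : x ≤ 0) : powLaw n x ≤ 0 :=
  mul_nonpos_of_nonneg_of_nonpos (Real.rpow_nonneg (abs_nonneg x) _) hx

lemma powLaw_nonneg {n x : ℝ} (hx : 0 ≤ x) : 0 ≤ powLaw n x :=
  mul_nonneg (Real.rpow_nonneg (abs_nonneg x) _) hx

lemma powLaw_pos {n x : ℝ} (hx : 0 < x) : 0 < powLaw n x :=
  mul_pos (Real.rpow_pos_of_pos (abs_pos.mpr hx.ne') _) hx

lemma pos_of_powLaw_pos {n x : ℝ} (h : 0 < powLaw n x) : 0 < x := by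
  by_contra hx
  push_neg at hx
  exact absurd h (not_lt.mpr (powLaw_nonpos hx))

lemma le_powLaw {n x : ℝ} (hn : 1 < n) (hx : 1 ≤ x) : x ≤ powLaw n x := by
  have h1 : (1:ℝ) ≤ |x| ^ (n - 1) :=
    Real.one_le_rpow (by rw [abs_of_nonneg (by linarith)]; exact hx) (by linarith)
  have : 1 * x ≤ |x| ^ (n - 1) * x := by
    apply mul_le_mul_of_nonneg_right h1 (by linarith)
  simpa [powLaw] using this

lemma abs_powLaw (n x : ℝ) : |powLaw n x| = |x| ^ (n - 1) * |x| := by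
  rw [powLaw, abs_mul, abs_of_nonneg (Real.rpow_nonneg (abs_nonneg x) _)]

lemma abs_le_of_powLaw {n x R : ℝ} (hn : 1 < n) (h : |powLaw n x| ≤ R) :
    |x| ≤ max 1 R := by
  by_contra hx
  push_neg at hx
  have h1 : (1:ℝ) ≤ |x| := le_of_lt (lt_of_le_of_lt (le_max_left 1 R) hx)
  have h2 : (1:ℝ) ≤ |x| ^ (n - 1) := Real.one_le_rpow h1 (by linarith)
  have h3 : |x| ≤ |x| ^ (n - 1) * |x| := by
    nlinarith
  rw [abs_powLaw] at h
  have : |x| ≤ R := le_trans h3 h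
  exact absurd (le_trans this (le_max_right 1 R)) (not_le.mpr hx)

lemma powLaw_of_pos {n x : ℝ} (hx : 0 < x) : powLaw n x = x ^ n := by
  rw [powLaw, abs_of_pos hx, ← Real.rpow_add_one hx.ne' (n - 1), sub_add_cancel]

lemma powLaw_reflect {n ℓ x : ℝ} (hn : 1 < n) (hℓ : 0 < ℓ)
    (h : powLaw n x < -powLaw n ℓ) : x < -ℓ := by
  by_contra hx
  push_neg at hx
  have : -powLaw n ℓ ≤ powLaw n x := by
    rcases le_or_gt 0 x with h0 | h0
    · have := powLaw_nonneg (n := n) h0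
      have := powLaw_pos (n := n) hℓ
      linarith
    · have habs : |x| ≤ ℓ := by
        rw [abs_of_neg h0]; linarith
      have h1 : |x| ^ (n - 1) ≤ ℓ ^ (n - 1) :=
        Real.rpow_le_rpow (abs_nonneg x) habs (by linarith)
      have h2 : |x| ^ (n - 1) * |x| ≤ ℓ ^ (n - 1) * ℓ :=
        mul_le_mul h1 habs (abs_nonneg x) (Real.rpow_nonneg hℓ.le _)
      have h3 : powLaw n x = -(|x| ^ (n - 1) * |x|) := by
        rw [powLaw, abs_of_neg h0]; ring
      have h4 : powLaw n ℓ = ℓ ^ (n - 1) * ℓ := by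
        rw [powLaw, abs_of_pos hℓ]
      linarith
  linarith

lemma hasDerivAt_maxrpow {p : ℝ} (hp : 1 < p) (x : ℝ) :
    HasDerivAt (fun y : ℝ => max y 0 ^ p) (p * max x 0 ^ (p - 1)) x := by
  rcases lt_trichotomy x 0 with hx | hx | hx
  · have hev : (fun y : ℝ => max y 0 ^ p) =ᶠ[𝓝 x] fun _ => (0:ℝ) ^ p := by
      filter_upwards [Iio_mem_nhds hx] with y hy
      rw [max_eq_right (le_of_lt hy)]
    have : HasDerivAt (fun _ : ℝ => (0:ℝ) ^ p) (p * max x 0 ^ (p - 1)) x := by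
      have : p * max x 0 ^ (p - 1) = 0 := by
        rw [max_eq_right hx.le, Real.zero_rpow (by linarith), mul_zero]
      rw [this]; exact hasDerivAt_const x _
    exact this.congr_of_eventuallyEq hev
  · subst hx
    rw [hasDerivAt_iff_tendsto_slope]
    have hval : p * max (0:ℝ) 0 ^ (p - 1) = 0 := by
      rw [max_self, Real.zero_rpow (by linarith), mul_zero]
    rw [hval]
    have hb : ∀ u : ℝ, ‖slope (fun y : ℝ => max y 0 ^ p) 0 u‖ ≤ |u| ^ (p - 1) := by
      intro u
      rcases lt_trichotomy u 0 with hu | hu | hu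
      · have : slope (fun y : ℝ => max y 0 ^ p) 0 u = 0 := by
          rw [slope_def_field, max_eq_right hu.le, max_self,
            Real.zero_rpow (by linarith : p ≠ 0)]
          simp
        rw [this]
        simpa using Real.rpow_nonneg (abs_nonneg u) _
      · subst hu
        simp only [slope_same, norm_zero]
        exact Real.rpow_nonneg (abs_nonneg 0) _
      · have : slope (fun y : ℝ => max y 0 ^ p) 0 u = u ^ (p - 1) := by
          rw [slope_def_field, max_eq_left hu.le, max_self,
            Real.zero_rpow (show p ≠ 0 by linarith), Real.rpow_sub hu,
            Real.rpow_one]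
          ring
        rw [this, abs_of_pos hu]
        simp [Real.norm_eq_abs, abs_of_nonneg (Real.rpow_nonneg hu.le _)]
    have hg : Tendsto (fun u : ℝ => |u| ^ (p - 1)) (𝓝[≠] (0:ℝ)) (𝓝 0) := by
      have hc : ContinuousAt (fun u : ℝ => |u| ^ (p - 1)) 0 := by
        exact (continuous_abs.continuousAt).rpow_const (Or.inr (by linarith))
      have h0 : |(0:ℝ)| ^ (p - 1) = 0 := by
        simp [Real.zero_rpow (show p - 1 ≠ 0 by linarith)]
      have := hc.tendsto
      rw [h0] at this
      exact this.mono_left nhdsWithin_le_nhds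
    exact squeeze_zero_norm hb hg
  · have hev : (fun y : ℝ => max y 0 ^ p) =ᶠ[𝓝 x] fun y => y ^ p := by
      filter_upwards [Ioi_mem_nhds hx] with y hy
      rw [max_eq_left (le_of_lt hy)]
    have h1 : HasDerivAt (fun y : ℝ => y ^ p) (p * x ^ (p - 1)) x :=
      Real.hasDerivAt_rpow_const (Or.inl hx.ne')
    have : p * max x 0 ^ (p - 1) = p * x ^ (p - 1) := by rw [max_eq_left hx.le]
    rw [this]
    exact h1.congr_of_eventuallyEq hev

lemma eventually_pos_right {h : ℝ → ℝ} {x c : ℝ} (hd : HasDerivAt h c x)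
    (hc : 0 < c) (hx : h x = 0) : ∀ᶠ u in 𝓝[>] x, 0 < h u := by
  have hs := hasDerivAt_iff_tendsto_slope.mp hd
  have h1 : ∀ᶠ u in 𝓝[≠] x, 0 < slope h x u := hs.eventually (eventually_gt_nhds hc)
  have hsub : Ioi x ⊆ {x}ᶜ := fun u hu => by
    simp only [mem_compl_iff, mem_singleton_iff]
    exact ne_of_gt hu
  have h2 : ∀ᶠ u in 𝓝[>] x, 0 < slope h x u :=
    h1.filter_mono (nhdsWithin_mono x hsub)
  filter_upwards [h2, self_mem_nhdsWithin] with u hu hu'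
  rw [slope_def_field, hx, sub_zero] at hu
  have hux : 0 < u - x := sub_pos.mpr hu'
  by_contra hcon
  push_neg at hcon
  have : h u / (u - x) ≤ 0 := div_nonpos_of_nonpos_of_nonneg hcon hux.le
  linarith

lemma eventually_neg_left {h : ℝ → ℝ} {x c : ℝ} (hd : HasDerivAt h c x)
    (hc : 0 < c) (hx : h x = 0) : ∀ᶠ u in 𝓝[<] x, h u < 0 := by
  have hs := hasDerivAt_iff_tendsto_slope.mp hd
  have h1 : ∀ᶠ u in 𝓝[≠] x, 0 < slope h x u := hs.eventually (eventually_gt_nhds hc)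
  have hsub : Iio x ⊆ {x}ᶜ := fun u hu => by
    simp only [mem_compl_iff, mem_singleton_iff]
    exact ne_of_lt hu
  have h2 : ∀ᶠ u in 𝓝[<] x, 0 < slope h x u :=
    h1.filter_mono (nhdsWithin_mono x hsub)
  filter_upwards [h2, self_mem_nhdsWithin] with u hu hu'
  rw [slope_def_field, hx, sub_zero] at hu
  have hux : u - x < 0 := sub_neg.mpr hu'
  by_contra hcon
  push_neg at hcon
  have : h u / (u - x) ≤ 0 := div_nonpos_of_nonneg_of_nonpos hcon hux.le
  linarith

lemma mono_aux {h : ℝ → ℝ} {x y : ℝ} (hxy : x ≤ y)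
    (hdiff : ∀ u ∈ Icc x y, DifferentiableAt ℝ h u)
    (hD : ∀ u ∈ Ioo x y, 0 ≤ deriv h u) : h x ≤ h y := by
  have hm : MonotoneOn h (Icc x y) := by
    apply monotoneOn_of_deriv_nonneg (convex_Icc x y)
      (fun u hu => (hdiff u hu).continuousAt.continuousWithinAt)
    · intro u hu
      rw [interior_Icc] at hu
      exact (hdiff u (Ioo_subset_Icc_self hu)).differentiableWithinAt
    · intro u hu
      rw [interior_Icc] at hu
      exact hD u hu
  exact hm (left_mem_Icc.mpr hxy) (right_mem_Icc.mpr hxy) hxy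

lemma anti_aux {h : ℝ → ℝ} {x y : ℝ} (hxy : x ≤ y)
    (hdiff : ∀ u ∈ Icc x y, DifferentiableAt ℝ h u)
    (hD : ∀ u ∈ Ioo x y, deriv h u ≤ 0) : h y ≤ h x := by
  have hm : AntitoneOn h (Icc x y) := by
    apply antitoneOn_of_deriv_nonpos (convex_Icc x y)
      (fun u hu => (hdiff u hu).continuousAt.continuousWithinAt)
    · intro u hu
      rw [interior_Icc] at hu
      exact (hdiff u (Ioo_subset_Icc_self hu)).differentiableWithinAt
    · intro u hu
      rw [interior_Icc] at hu
      exact hD u hu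
  exact hm (left_mem_Icc.mpr hxy) (right_mem_Icc.mpr hxy) hxy

set_option maxHeartbeats 1000000 in
theorem stmt_7 (n α m : ℝ) (hn : 1 < n) (hα : 0 < α) (hm₁ : -α < m) (hm₂ : m < 0)
    (T : EReal) (hT : 0 < T) (f : ℝ → ℝ) (a b d : ℝ)
    (ha : 0 ≤ a) (hb : 0 ≤ b) (hd : |d| ^ (n - 1) * d > -α * a * b)
    (hf : SolvesPowerLawODE n α m f {t : ℝ | 0 ≤ t ∧ (t : EReal) < T})
    (hf0 : f 0 = a) (hf0' : deriv f 0 = b) (hf0'' : deriv (deriv f) 0 = d) :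
    (∀ t : ℝ, 0 < t → (t : EReal) < T → 0 < f t ∧ 0 < deriv f t) ∧
    (∃ C : ℝ, ∀ t : ℝ, 0 ≤ t → (t : EReal) < T → |deriv f t| ≤ C) ∧
    (∃ C : ℝ, ∀ t : ℝ, 0 ≤ t → (t : EReal) < T → |deriv (deriv f) t| ≤ C) := by
  set I : Set ℝ := {t : ℝ | 0 ≤ t ∧ (t : EReal) < T} with hIdef
  set g : ℝ → ℝ := fun s => powLaw n (deriv (deriv f) s) with hgdef
  obtain ⟨hf1, hf2, hf3, hf4, hfeq⟩ := hf
  -- basic facts about I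
  have hI0 : (0:ℝ) ∈ I := ⟨le_refl 0, by exact_mod_cast hT⟩
  have hIsub : ∀ {s t : ℝ}, 0 ≤ s → s ≤ t → t ∈ I → s ∈ I := by
    intro s t hs hst ht
    exact ⟨hs, lt_of_le_of_lt (by exact_mod_cast hst) ht.2⟩
  have hIcc : ∀ t ∈ I, Icc 0 t ⊆ I := by
    intro t ht u hu
    exact hIsub hu.1 hu.2 ht
  -- the ODE, rewritten
  have heq : ∀ t ∈ I, deriv g t = m * (deriv f t) ^ 2 - α * f t * deriv (deriv f) t := by
    intro t ht
    have := hfeq t ht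
    linarith
  -- the auxiliary function φ = g + α f f'
  set φ : ℝ → ℝ := fun t => g t + α * (f t * deriv f t) with hφdef
  have hφd : ∀ t ∈ I, HasDerivAt φ ((m + α) * (deriv f t) ^ 2) t := by
    intro t ht
    have h1 : HasDerivAt g (deriv g t) t := (hf4 t ht).hasDerivAt
    have h2 : HasDerivAt (fun u => f u * deriv f u)
        (deriv f t * deriv f t + f t * deriv (deriv f) t) t :=
      (hf1 t ht).hasDerivAt.mul (hf2 t ht).hasDerivAt
    have h3 := h1.add (h2.const_mul α)
    refine h3.congr_deriv ?_
    rw [heq t ht]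
    ring
  have hφdiff : ∀ t ∈ I, DifferentiableAt ℝ φ t := fun t ht =>
    (hφd t ht).differentiableAt
  have hφ0 : 0 < φ 0 := by
    have : φ 0 = powLaw n d + α * (a * b) := by
      simp only [hφdef, hgdef, hf0, hf0', hf0'']
    rw [this]
    rw [powLaw]
    nlinarith [hd]
  have hφmono : ∀ t ∈ I, φ 0 ≤ φ t := by
    intro t ht
    apply mono_aux ht.1 (fun u hu => hφdiff u (hIcc t ht hu))
    intro u hu
    have huI : u ∈ I := hIcc t ht (Ioo_subset_Icc_self hu)
    rw [(hφd u huI).deriv]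
    have : 0 < m + α := by linarith
    positivity
  -- Step 1: at any zero of f', f'' is positive
  have L1 : ∀ t ∈ I, deriv f t = 0 → 0 < deriv (deriv f) t := by
    intro t ht hzero
    apply pos_of_powLaw_pos (n := n)
    have : g t = φ t := by simp [hφdef, hzero]
    rw [hgdef] at this  -- no-op safe
    have h := lt_of_lt_of_le hφ0 (hφmono t ht)
    calc (0:ℝ) < φ t := h
    _ = g t := this.symm
  -- Step 2: f' is nonnegative on I
  have hcontf' : ∀ t ∈ I, ContinuousAt (deriv f) t := fun t ht => (hf2 t ht).continuousAt
  have hf'nonneg : ∀ t ∈ I, 0 ≤ deriv f t := by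
    by_contra hcon
    push_neg at hcon
    obtain ⟨t₁, ht₁, hneg⟩ := hcon
    have ht₁pos : 0 < t₁ := by
      rcases lt_or_eq_of_le ht₁.1 with h | h
      · exact h
      · rw [← h] at hneg; rw [hf0'] at hneg; linarith
    set S : Set ℝ := Icc 0 t₁ ∩ (deriv f) ⁻¹' (Ici 0) with hSdef
    have hScl : IsClosed S := by
      apply ContinuousOn.preimage_isClosed_of_isClosed _ isClosed_Icc isClosed_Ici
      exact fun u hu => (hcontf' u (hIcc t₁ ht₁ hu)).continuousWithinAt
    have hS0 : (0:ℝ) ∈ S := ⟨⟨le_refl 0, ht₁pos.le⟩, by simp [hf0', hb]⟩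
    have hSbdd : BddAbove S := (bddAbove_Icc).mono inter_subset_left
    set s := sSup S with hsdef
    have hsS : s ∈ S := hScl.csSup_mem ⟨0, hS0⟩ hSbdd
    have hsI : s ∈ I := hIcc t₁ ht₁ hsS.1
    have hst : s < t₁ := by
      rcases lt_or_eq_of_le hsS.1.2 with h | h
      · exact h
      · exfalso; have := hsS.2; rw [h] at this; exact absurd this (by simpa using hneg.not_ge)
    have hIoc : ∀ u ∈ Ioc s t₁, deriv f u < 0 := by
      intro u hu
      by_contra hcon2
      push_neg at hcon2
      have huS : u ∈ S := ⟨⟨le_trans hsS.1.1 hu.1.le, hu.2⟩, hcon2⟩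
      exact absurd (le_csSup hSbdd huS) (not_le.mpr hu.1)
    have hfs0 : deriv f s = 0 := by
      have hle : deriv f s ≤ 0 := by
        have htend : Tendsto (deriv f) (𝓝[>] s) (𝓝 (deriv f s)) :=
          (hcontf' s hsI).tendsto.mono_left nhdsWithin_le_nhds
        apply le_of_tendsto htend
        filter_upwards [Ioc_mem_nhdsGT_of_mem ⟨le_refl s, hst⟩] with u hu
        exact (hIoc u hu).le
      exact le_antisymm hle hsS.2
    have hf''s : 0 < deriv (deriv f) s := L1 s hsI hfs0
    have hev := eventually_pos_right ((hf2 s hsI).hasDerivAt) hf''s hfs0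
    have hev2 : Ioc s t₁ ∈ 𝓝[>] s := Ioc_mem_nhdsGT_of_mem ⟨le_refl s, hst⟩
    obtain ⟨u, hu1, hu2⟩ := (hev.and (eventually_mem_set.mpr hev2)).exists
    exact absurd hu1 (not_lt.mpr (hIoc u hu2).le)
  -- Step 3: f' is positive on the interior
  have hf'pos : ∀ t ∈ I, 0 < t → 0 < deriv f t := by
    intro t ht htpos
    rcases lt_or_eq_of_le (hf'nonneg t ht) with h | h
    · exact h
    exfalso
    have hf''t : 0 < deriv (deriv f) t := L1 t ht h.symm
    have hev := eventually_neg_left ((hf2 t ht).hasDerivAt) hf''t h.symm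
    have hev2 : Ioo 0 t ∈ 𝓝[<] t := Ioo_mem_nhdsLT_of_mem ⟨htpos, le_refl t⟩
    obtain ⟨u, hu1, hu2⟩ := (hev.and (eventually_mem_set.mpr hev2)).exists
    have huI : u ∈ I := hIsub hu2.1.le hu2.2.le ht
    exact absurd hu1 (not_lt.mpr (hf'nonneg u huI))
  -- Step 4: f is positive on the interior, nonnegative on I
  have hfpos : ∀ t ∈ I, 0 < t → 0 < f t := by
    intro t ht htpos
    have hsm : StrictMonoOn f (Icc 0 t) := by
      apply strictMonoOn_of_deriv_pos (convex_Icc 0 t)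
      · exact fun u hu => (hf1 u (hIcc t ht hu)).continuousAt.continuousWithinAt
      · intro u hu
        rw [interior_Icc] at hu
        exact hf'pos u (hIcc t ht (Ioo_subset_Icc_self hu)) hu.1
    have := hsm (left_mem_Icc.mpr htpos.le) (right_mem_Icc.mpr htpos.le) htpos
    rw [hf0] at this
    linarith
  have hfnonneg : ∀ t ∈ I, 0 ≤ f t := by
    intro t ht
    rcases lt_or_eq_of_le ht.1 with h | h
    · exact (hfpos t ht h).le
    · rw [← h, hf0]; exact ha
  -- The Lyapunov function Ψ
  set p : ℝ := 1 + 1/n with hpdef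
  have hn0 : (0:ℝ) < n := by linarith
  have hp : 1 < p := by
    rw [hpdef]
    have : 0 < 1/n := by positivity
    linarith
  set Ψ : ℝ → ℝ := fun t => (1/p) * (max (g t) 0) ^ p + (-m)/3 * (deriv f t) ^ 3
    with hΨdef
  have hΨd : ∀ t ∈ I, HasDerivAt Ψ
      ((1/p) * (p * max (g t) 0 ^ (p - 1) * deriv g t)
        + (-m)/3 * ((3:ℕ) * deriv f t ^ 2 * deriv (deriv f) t)) t := by
    intro t ht
    have h1 : HasDerivAt (fun u => max (g u) 0 ^ p)
        (p * max (g t) 0 ^ (p - 1) * deriv g t) t :=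
      (hasDerivAt_maxrpow hp (g t)).comp t (hf4 t ht).hasDerivAt
    have h2 : HasDerivAt (fun u => (deriv f u) ^ 3)
        ((3:ℕ) * deriv f t ^ (3-1) * deriv (deriv f) t) t :=
      (hf2 t ht).hasDerivAt.pow 3
    exact (h1.const_mul (1/p)).add (h2.const_mul ((-m)/3))
  have hΨderiv_nonpos : ∀ t ∈ I,
      (1/p) * (p * max (g t) 0 ^ (p - 1) * deriv g t)
        + (-m)/3 * ((3:ℕ) * deriv f t ^ 2 * deriv (deriv f) t) ≤ 0 := by
    intro t ht
    rcases le_or_gt (deriv (deriv f) t) 0 with hf'' | hf''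
    · have hg0 : g t ≤ 0 := powLaw_nonpos hf''
      have hmax : max (g t) 0 = 0 := max_eq_right hg0
      rw [hmax, Real.zero_rpow (by linarith : p - 1 ≠ 0)]
      have h3 : 0 ≤ deriv f t ^ 2 * (-(deriv (deriv f) t)) :=
        mul_nonneg (sq_nonneg _) (by linarith)
      have h2 : (-m)/3 * (((3:ℕ):ℝ) * deriv f t ^ 2 * deriv (deriv f) t) ≤ 0 := by
        push_cast
        nlinarith [mul_nonneg (by linarith : (0:ℝ) ≤ -m) h3]
      simpa using h2
    · -- f'' > 0
      have hgpos : 0 < g t := powLaw_pos hf''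
      have hmax : max (g t) 0 = g t := max_eq_left hgpos.le
      have hgval : g t = deriv (deriv f) t ^ n := powLaw_of_pos hf''
      have hpow : g t ^ (p - 1) = deriv (deriv f) t := by
        rw [hgval]
        have h1 : p - 1 = 1/n := by rw [hpdef]; ring
        rw [h1, ← Real.rpow_mul hf''.le, mul_one_div_cancel hn0.ne', Real.rpow_one]
      rw [hmax, hpow, heq t ht]
      have hfnn := hfnonneg t ht
      have hpne : p ≠ 0 := by linarith
      have key : (1/p) * (p * deriv (deriv f) t * (m * deriv f t ^ 2 - α * f t * deriv (deriv f) t))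
          + (-m)/3 * ((3:ℕ) * deriv f t ^ 2 * deriv (deriv f) t)
          = -(α * f t * deriv (deriv f) t ^ 2) := by
        field_simp
        ring
      rw [key]
      have : 0 ≤ α * f t * deriv (deriv f) t ^ 2 := by positivity
      linarith
  have hΨ0 : ∀ t ∈ I, Ψ t ≤ Ψ 0 := by
    intro t ht
    apply anti_aux ht.1
    · exact fun u hu => (hΨd u (hIcc t ht hu)).differentiableAt
    · intro u hu
      have huI : u ∈ I := hIcc t ht (Ioo_subset_Icc_self hu)
      rw [(hΨd u huI).deriv]
      exact hΨderiv_nonpos u huI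
  -- the bound for f'
  set B : ℝ := max 1 (3 * Ψ 0 / (-m)) with hBdef
  have hB1 : (1:ℝ) ≤ B := le_max_left _ _
  have hBpos : (0:ℝ) < B := lt_of_lt_of_le one_pos hB1
  have hf'B : ∀ t ∈ I, deriv f t ≤ B := by
    intro t ht
    have h1 : (-m)/3 * (deriv f t) ^ 3 ≤ Ψ t := by
      have : 0 ≤ (1/p) * (max (g t) 0) ^ p := by
        have : (0:ℝ) ≤ max (g t) 0 := le_max_right _ _
        have h2 : (0:ℝ) ≤ (max (g t) 0) ^ p := Real.rpow_nonneg this _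
        have hppos : 0 < p := by linarith
        positivity
      rw [hΨdef]
      linarith
    have h2 : (deriv f t) ^ 3 ≤ 3 * Ψ 0 / (-m) := by
      have hm0 : (0:ℝ) < -m := by linarith
      have h3 : (-m)/3 * deriv f t ^ 3 ≤ Ψ 0 := le_trans h1 (hΨ0 t ht)
      rw [le_div_iff₀ hm0]
      generalize hP : Ψ 0 = P at h3 ⊢
      generalize hc : deriv f t ^ 3 = c at h3 ⊢
      linarith
    by_contra hcon
    push_neg at hcon
    have hft1 : (1:ℝ) ≤ deriv f t := le_of_lt (lt_of_le_of_lt hB1 hcon)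
    have hx3 : deriv f t ≤ deriv f t ^ 3 := by
      nlinarith [mul_nonneg (by linarith : (0:ℝ) ≤ deriv f t)
        (by nlinarith : (0:ℝ) ≤ deriv f t ^ 2 - 1)]
    have : deriv f t ≤ 3 * Ψ 0 / (-m) := le_trans hx3 h2
    have : deriv f t ≤ B := le_trans this (le_max_right _ _)
    linarith
  clear hBdef
  clear_value B
  clear hΨ0 hΨderiv_nonpos hΨd hΨdef
  clear_value Ψ
  clear Ψ
  clear hp hpdef
  clear_value p
  clear p
  -- continuity of g on I
  have hcontg : ∀ t ∈ I, ContinuousAt g t := fun t ht => (hf4 t ht).continuousAt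
  -- Step 5: upper bound for g
  set M : ℝ := max (g 0) 0 with hMdef
  have hM0 : 0 ≤ M := le_max_right _ _
  have hgM : ∀ t ∈ I, g t ≤ M := by
    by_contra hcon
    push_neg at hcon
    obtain ⟨t₁, ht₁, hgt⟩ := hcon
    set S : Set ℝ := Icc 0 t₁ ∩ g ⁻¹' (Iic M) with hSdef
    have hScl : IsClosed S := by
      apply ContinuousOn.preimage_isClosed_of_isClosed _ isClosed_Icc isClosed_Iic
      exact fun u hu => (hcontg u (hIcc t₁ ht₁ hu)).continuousWithinAt
    have ht₁0 : 0 ≤ t₁ := ht₁.1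
    have hS0 : (0:ℝ) ∈ S := by
      refine ⟨⟨le_refl 0, ht₁0⟩, ?_⟩
      simp only [Set.mem_preimage, Set.mem_Iic, hMdef]
      exact le_max_left _ _
    have hSbdd : BddAbove S := (bddAbove_Icc).mono inter_subset_left
    set s := sSup S with hsdef
    have hsS : s ∈ S := hScl.csSup_mem ⟨0, hS0⟩ hSbdd
    have hsS2 : g s ≤ M := hsS.2
    have hsI : s ∈ I := hIcc t₁ ht₁ hsS.1
    have hst : s < t₁ := by
      rcases lt_or_eq_of_le hsS.1.2 with h | h
      · exact h
      · exfalso; rw [h] at hsS2; exact absurd hsS2 (not_le.mpr hgt)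
    have hIoc : ∀ u ∈ Ioc s t₁, M < g u := by
      intro u hu
      by_contra hcon2
      push_neg at hcon2
      have huS : u ∈ S := ⟨⟨le_trans hsS.1.1 hu.1.le, hu.2⟩, hcon2⟩
      exact absurd (le_csSup hSbdd huS) (not_le.mpr hu.1)
    clear hS0
    have hanti : g t₁ ≤ g s := by
      apply anti_aux hst.le
      · intro u hu
        have huI : u ∈ I := hIsub (le_trans hsS.1.1 hu.1) hu.2 ht₁
        exact hf4 u huI
      · intro u hu
        have huI : u ∈ I := hIsub (le_trans hsS.1.1 hu.1.le) hu.2.le ht₁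
        rw [heq u huI]
        have hguM : M < g u := hIoc u ⟨hu.1, hu.2.le⟩
        have hf''u : 0 < deriv (deriv f) u :=
          pos_of_powLaw_pos (lt_of_le_of_lt hM0 hguM)
        have h1 : m * deriv f u ^ 2 ≤ 0 :=
          mul_nonpos_of_nonpos_of_nonneg hm₂.le (sq_nonneg _)
        have h2 : 0 ≤ α * f u * deriv (deriv f) u := by
          have := hfnonneg u huI
          positivity
        linarith
    exact absurd (le_trans hanti hsS2) (not_le.mpr hgt)
  -- f'' is bounded above everywhere on I via g ≤ M; now get a lower bound for g
  have hf''K : ∀ u ∈ I, deriv (deriv f) u ≤ max 1 M := by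
    intro u huI
    by_contra hcon
    push_neg at hcon
    have h1 : (1:ℝ) ≤ deriv (deriv f) u := le_trans (le_max_left _ _) hcon.le
    have h2 := le_powLaw hn h1
    have h3 := hgM u huI
    have h4 : M ≤ max 1 M := le_max_right _ _
    have : g u = powLaw n (deriv (deriv f) u) := rfl
    linarith [this ▸ h2]
  have hglow : ∃ Lg : ℝ, 0 ≤ Lg ∧ ∀ t ∈ I, -Lg ≤ g t := by
    by_cases hTtop : T = ⊤
    · -- infinite horizon: barrier argument
      have hmemI : ∀ t : ℝ, 0 ≤ t → t ∈ I := fun t ht =>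
        ⟨ht, hTtop ▸ EReal.coe_lt_top t⟩
      have h1I : (1:ℝ) ∈ I := hmemI 1 zero_le_one
      have hρ : 0 < f 1 := hfpos 1 h1I one_pos
      obtain ⟨L₁, hL₁⟩ : ∃ C, ∀ u ∈ Icc (0:ℝ) 1, ‖g u‖ ≤ C :=
        isCompact_Icc.exists_bound_of_continuousOn
          (fun u hu => (hcontg u (hIcc 1 h1I hu)).continuousWithinAt)
      have hL₁0 : 0 ≤ L₁ := le_trans (norm_nonneg _) (hL₁ 0 ⟨le_refl 0, zero_le_one⟩)
      set ℓ : ℝ := ((-m) * B ^ 2 + 1) / (α * f 1) with hℓdef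
      have hnum : 0 < (-m) * B ^ 2 + 1 := by nlinarith
      have hden : 0 < α * f 1 := mul_pos hα hρ
      have hℓpos : 0 < ℓ := div_pos hnum hden
      have hkey : α * f 1 * ℓ = (-m) * B ^ 2 + 1 := by
        rw [hℓdef]
        field_simp
      refine ⟨max L₁ (powLaw n ℓ), le_trans hL₁0 (le_max_left _ _), ?_⟩
      set L : ℝ := max L₁ (powLaw n ℓ) with hLdef
      intro t ht
      by_contra hcon
      push_neg at hcon
      have ht1 : 1 < t := by
        by_contra h1t
        push_neg at h1t
        have := hL₁ t ⟨ht.1, h1t⟩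
        rw [Real.norm_eq_abs, abs_le] at this
        have : -L ≤ g t := le_trans (neg_le_neg (le_max_left L₁ _)) this.1
        linarith
      set S : Set ℝ := Icc 1 t ∩ g ⁻¹' (Ici (-L)) with hSdef
      have hScl : IsClosed S := by
        apply ContinuousOn.preimage_isClosed_of_isClosed _ isClosed_Icc isClosed_Ici
        intro u hu
        exact (hcontg u (hmemI u (le_trans zero_le_one hu.1))).continuousWithinAt
      have hS1 : (1:ℝ) ∈ S := by
        refine ⟨⟨le_refl 1, ht1.le⟩, ?_⟩
        simp only [Set.mem_preimage, Set.mem_Ici]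
        have := hL₁ 1 ⟨zero_le_one, le_refl 1⟩
        rw [Real.norm_eq_abs, abs_le] at this
        exact le_trans (neg_le_neg (le_max_left L₁ _)) this.1
      have hSbdd : BddAbove S := (bddAbove_Icc).mono inter_subset_left
      set s := sSup S with hsdef
      have hsS : s ∈ S := hScl.csSup_mem ⟨1, hS1⟩ hSbdd
      have hsS2 : -L ≤ g s := hsS.2
      have hs1 : 1 ≤ s := hsS.1.1
      have hst : s < t := by
        rcases lt_or_eq_of_le hsS.1.2 with h | h
        · exact h
        · exfalso; rw [h] at hsS2; linarith
      have hIoc : ∀ u ∈ Ioc s t, g u < -L := by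
        intro u hu
        by_contra hcon2
        push_neg at hcon2
        have huS : u ∈ S := ⟨⟨le_trans hs1 hu.1.le, hu.2⟩, hcon2⟩
        exact absurd (le_csSup hSbdd huS) (not_le.mpr hu.1)
      have hmono : g s ≤ g t := by
        apply mono_aux hst.le
        · intro u hu
          exact hf4 u (hmemI u (le_trans zero_le_one (le_trans hs1 hu.1)))
        · intro u hu
          have hu1 : 1 ≤ u := le_trans hs1 hu.1.le
          have huI : u ∈ I := hmemI u (le_trans zero_le_one hu1)
          rw [heq u huI]
          have hgu : g u < -L := hIoc u ⟨hu.1, hu.2.le⟩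
          have hgu2 : powLaw n (deriv (deriv f) u) < -powLaw n ℓ := by
            have : powLaw n ℓ ≤ L := le_max_right L₁ _
            have hgu' : powLaw n (deriv (deriv f) u) < -L := hgu
            linarith
          have hf''u : deriv (deriv f) u < -ℓ := powLaw_reflect hn hℓpos hgu2
          have hfu : f 1 ≤ f u := by
            apply mono_aux hu1
            · intro v hv
              exact hf1 v (hmemI v (le_trans zero_le_one hv.1))
            · intro v hv
              have hvI : v ∈ I := hmemI v (le_trans zero_le_one hv.1.le)
              exact hf'nonneg v hvI
          have hb1 : m * B ^ 2 ≤ m * deriv f u ^ 2 := by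
            nlinarith [pow_le_pow_left₀ (hf'nonneg u huI) (hf'B u huI) 2, hm₂]
          have hb2 : α * f 1 * ℓ ≤ α * f u * (-(deriv (deriv f) u)) := by
            have h1 : α * f 1 ≤ α * f u :=
              mul_le_mul_of_nonneg_left hfu hα.le
            have h2 : ℓ ≤ -(deriv (deriv f) u) := by linarith
            exact mul_le_mul h1 h2 hℓpos.le (mul_nonneg hα.le (hfnonneg u huI))
          linarith [hb1, hb2, hkey]
      linarith [hIoc t ⟨hst, le_refl t⟩]
    · -- finite horizon
      have hTne : T ≠ ⊥ := (lt_of_le_of_lt bot_le hT).ne'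
      set Tr : ℝ := T.toReal with hTrdef
      have hcoe : (Tr : EReal) = T := EReal.coe_toReal hTtop hTne
      have hTrpos : 0 < Tr := by
        have : ((0:ℝ) : EReal) < (Tr : EReal) := by
          rw [hcoe]; exact_mod_cast hT
        exact_mod_cast this
      have htle : ∀ t ∈ I, t ≤ Tr := by
        intro t ht
        have h2 := ht.2
        rw [← hcoe] at h2
        exact (EReal.coe_lt_coe_iff.mp h2).le
      have hderaux : ∀ u ∈ I, HasDerivAt (fun v => a + B * v - f v) (B - deriv f u) u := by
        intro u huI
        have h1 : HasDerivAt (fun v : ℝ => a + B * v) B u := by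
          simpa using ((hasDerivAt_id u).const_mul B).const_add a
        exact h1.sub (hf1 u huI).hasDerivAt
      have hfF : ∀ t ∈ I, f t ≤ a + B * Tr := by
        intro t ht
        have key := mono_aux (h := fun v => a + B * v - f v) ht.1
          (fun u hu => (hderaux u (hIcc t ht hu)).differentiableAt)
          (fun u hu => by
            have huI := hIcc t ht (Ioo_subset_Icc_self hu)
            rw [(hderaux u huI).deriv]
            linarith [hf'B u huI])
        simp only [hf0] at key
        have htTr := htle t ht
        linarith [key, mul_le_mul_of_nonneg_left htTr hBpos.le]
      set F : ℝ := a + B * Tr with hFdef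
      have hF0 : 0 ≤ F := by
        rw [hFdef]; linarith [mul_pos hBpos hTrpos]
      set K : ℝ := max 1 M with hKdef
      have hK0 : (0:ℝ) ≤ K := le_trans zero_le_one (le_max_left _ _)
      set c : ℝ := (-m) * B ^ 2 + α * F * K with hcdef
      have hc0 : 0 ≤ c := by
        rw [hcdef]
        have h1 : 0 ≤ (-m) * B ^ 2 :=
          mul_nonneg (by linarith) (sq_nonneg B)
        have h2 : 0 ≤ α * F * K := mul_nonneg (mul_nonneg hα.le hF0) hK0
        linarith
      have hgd : ∀ u ∈ I, -c ≤ deriv g u := by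
        intro u huI
        rw [heq u huI]
        have hb1 : m * B ^ 2 ≤ m * deriv f u ^ 2 := by
          nlinarith [pow_le_pow_left₀ (hf'nonneg u huI) (hf'B u huI) 2, hm₂]
        have hb2 : α * f u * deriv (deriv f) u ≤ α * F * K := by
          rcases le_or_gt (deriv (deriv f) u) 0 with h | h
          · have h1 : α * f u * deriv (deriv f) u ≤ 0 :=
              mul_nonpos_of_nonneg_of_nonpos
                (mul_nonneg hα.le (hfnonneg u huI)) h
            linarith [mul_nonneg (mul_nonneg hα.le hF0) hK0]
          · have hfu := hfnonneg u huI
            have hfuF := hfF u huI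
            have hKu' : deriv (deriv f) u ≤ K := hf''K u huI
            have h2 : f u * deriv (deriv f) u ≤ F * K :=
              mul_le_mul hfuF hKu' h.le hF0
            have h3 := mul_le_mul_of_nonneg_left h2 hα.le
            linarith [h3]
        rw [hcdef]
        linarith [hb1, hb2]
      have hgderaux : ∀ u ∈ I, HasDerivAt (fun v => g v + c * v) (deriv g u + c) u := by
        intro u huI
        have h1 : HasDerivAt (fun v : ℝ => c * v) c u := by
          simpa using (hasDerivAt_id u).const_mul c
        exact (hf4 u huI).hasDerivAt.add h1
      refine ⟨max 0 (c * Tr - g 0), le_max_left _ _, ?_⟩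
      intro t ht
      have key := mono_aux (h := fun v => g v + c * v) ht.1
        (fun u hu => (hgderaux u (hIcc t ht hu)).differentiableAt)
        (fun u hu => by
          have huI := hIcc t ht (Ioo_subset_Icc_self hu)
          rw [(hgderaux u huI).deriv]
          linarith [hgd u huI])
      have htTr := htle t ht
      have h1 : c * Tr - g 0 ≤ max 0 (c * Tr - g 0) := le_max_right _ _
      have h2 : c * t ≤ c * Tr := mul_le_mul_of_nonneg_left htTr hc0
      linarith
  obtain ⟨Lg, hLg0, hLg⟩ := hglow
  -- assemble the conclusion
  have habsg : ∀ t ∈ I, |g t| ≤ max M Lg := by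
    intro t ht
    rw [abs_le]
    constructor
    · exact le_trans (neg_le_neg (le_max_right M Lg)) (hLg t ht)
    · exact le_trans (hgM t ht) (le_max_left M Lg)
  refine ⟨?_, ⟨B, ?_⟩, ⟨max 1 (max M Lg), ?_⟩⟩
  · intro t htpos hlt
    exact ⟨hfpos t ⟨htpos.le, hlt⟩ htpos, hf'pos t ⟨htpos.le, hlt⟩ htpos⟩
  · intro t ht hlt
    have htI : t ∈ I := ⟨ht, hlt⟩
    rw [abs_of_nonneg (hf'nonneg t htI)]
    exact hf'B t htI
  · intro t ht hlt
    have htI : t ∈ I := ⟨ht, hlt⟩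
    exact abs_le_of_powLaw hn (habsg t htI)
end

section
/- Let I ⊆ ℝ be an open interval and let f : ℝ → ℝ be three times differentiable on I with f''(t) > 0 for all t ∈ I, satisfying the classical equation n·(f''(t))^{n−1}·f'''(t) + α·f(t)·f''(t) = m·(f'(t))² on I. Then the function H(t) = f(t)·(f''(t))^n − (1/2)·(f'(t))²·(f''(t))^{n−1} + α·(f(t))²·f'(t) is differentiable on I with H'(t) = f(t)·(f'(t))²·[m + 2α + α(n−1)/(2n)] − (m(n−1)/(2n))·(f'(t))⁴·(f''(t))^{−1} for all t ∈ I. -/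
open Real Set Filter Topology

theorem stmt_11 (n α m : ℝ) (hn : 1 < n) (I : Set ℝ)
    (hI : IsOpen I) (hI' : I.OrdConnected) (f : ℝ → ℝ)
    (hf1 : ∀ t ∈ I, DifferentiableAt ℝ f t)
    (hf2 : ∀ t ∈ I, DifferentiableAt ℝ (deriv f) t)
    (hf3 : ∀ t ∈ I, DifferentiableAt ℝ (deriv (deriv f)) t)
    (hpos : ∀ t ∈ I, 0 < deriv (deriv f) t)
    (heq : ∀ t ∈ I,
      n * (deriv (deriv f) t) ^ (n - 1) * deriv (deriv (deriv f)) t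
        + α * f t * deriv (deriv f) t = m * (deriv f t) ^ 2) :
    ∀ t ∈ I,
      HasDerivAt
        (fun s => f s * (deriv (deriv f) s) ^ n
          - (1 / 2) * (deriv f s) ^ 2 * (deriv (deriv f) s) ^ (n - 1)
          + α * (f s) ^ 2 * deriv f s)
        (f t * (deriv f t) ^ 2 * (m + 2 * α + α * (n - 1) / (2 * n))
          - (m * (n - 1) / (2 * n)) * (deriv f t) ^ 4 * (deriv (deriv f) t)⁻¹)
        t := by
  intro t ht
  set a := f t with ha
  set b := deriv f t with hb
  set c := deriv (deriv f) t with hc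
  set d := deriv (deriv (deriv f)) t with hd
  have hcpos : 0 < c := hpos t ht
  have hcne : c ≠ 0 := ne_of_gt hcpos
  have hn0 : n ≠ 0 := by linarith
  have hfa : HasDerivAt f b t := (hf1 t ht).hasDerivAt
  have hfb : HasDerivAt (deriv f) c t := (hf2 t ht).hasDerivAt
  have hfc : HasDerivAt (deriv (deriv f)) d t := (hf3 t ht).hasDerivAt
  have hrp : HasDerivAt (fun s => (deriv (deriv f) s) ^ n)
      (n * c ^ (n - 1) * d) t := by
    have := (Real.hasDerivAt_rpow_const (x := c) (p := n) (Or.inl hcne)).comp t hfc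
    exact this
  have hrp1 : HasDerivAt (fun s => (deriv (deriv f) s) ^ (n - 1))
      ((n - 1) * c ^ (n - 1 - 1) * d) t := by
    have := (Real.hasDerivAt_rpow_const (x := c) (p := n - 1) (Or.inl hcne)).comp t hfc
    exact this
  have h1 : HasDerivAt (fun s => f s * (deriv (deriv f) s) ^ n)
      (b * c ^ n + a * (n * c ^ (n - 1) * d)) t := hfa.mul hrp
  have h2 : HasDerivAt (fun s => (1 / 2) * (deriv f s) ^ 2 * (deriv (deriv f) s) ^ (n - 1))
      ((1 / 2) * (2 * b ^ 1 * c) * c ^ (n - 1)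
        + (1 / 2) * b ^ 2 * ((n - 1) * c ^ (n - 1 - 1) * d)) t := by
    exact (((hfb.pow 2).const_mul (1 / 2)).mul hrp1)
  have h3 : HasDerivAt (fun s => α * (f s) ^ 2 * deriv f s)
      (α * (2 * a ^ 1 * b) * b + α * a ^ 2 * c) t := ((hfa.pow 2).const_mul α).mul hfb
  have H := (h1.sub h2).add h3
  refine H.congr_deriv ?_
  have hode : n * c ^ (n - 1) * d + α * a * c = m * b ^ 2 := heq t ht
  have hX : c ^ (n - 1) ≠ 0 := ne_of_gt (Real.rpow_pos_of_pos hcpos _)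
  have hcn : c ^ n = c ^ (n - 1) * c := by
    rw [← Real.rpow_add_one hcne (n - 1)]; ring_nf
  have hcn2 : c ^ (n - 1 - 1) = c ^ (n - 1) / c := by
    rw [Real.rpow_sub hcpos, Real.rpow_one]
  have hdval : d = (m * b ^ 2 - α * a * c) / (n * c ^ (n - 1)) := by
    field_simp
    linarith [hode]
  rw [hcn, hcn2, hdval]
  field_simp
  ring
end

section
/- Assume α > 0 and −2α < m < 0. Let f : ℝ → ℝ solve the power-law ODE on [0,∞) with f(t) > 0 for all t ≥ 0, f(t) → ∞ and f'(t) → 0 as t → ∞. Then there exists t₀ ≥ 0 such that f'(t) > 0 and f''(t) < 0 for all t > t₀. -/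
open Real Set Filter Topology

lemma powLaw_pos_iff {n x : ℝ} : 0 < powLaw n x ↔ 0 < x := by
  unfold powLaw
  constructor
  · intro h
    by_contra hx
    push_neg at hx
    have : |x| ^ (n - 1) * x ≤ 0 :=
      mul_nonpos_iff.mpr (Or.inl ⟨Real.rpow_nonneg (abs_nonneg x) _, hx⟩)
    linarith
  · intro h
    exact mul_pos (Real.rpow_pos_of_pos (abs_pos.mpr h.ne') _) h

lemma powLaw_zero (n : ℝ) : powLaw n 0 = 0 := by simp [powLaw]

theorem stmt_12 (n α m : ℝ) (hn : 1 < n) (hα : 0 < α) (hm₁ : -2 * α < m) (hm₂ : m < 0)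
    (f : ℝ → ℝ)
    (hf : SolvesPowerLawODE n α m f (Set.Ici 0))
    (hpos : ∀ t : ℝ, 0 ≤ t → 0 < f t)
    (hinf : Filter.Tendsto f Filter.atTop Filter.atTop)
    (hd0 : Filter.Tendsto (deriv f) Filter.atTop (nhds 0)) :
    ∃ t₀ : ℝ, 0 ≤ t₀ ∧ ∀ t : ℝ, t₀ < t → 0 < deriv f t ∧ deriv (deriv f) t < 0 := by
  obtain ⟨hf1, hf2, hf3, hf4, hf5⟩ := hf
  set g : ℝ → ℝ := (fun s => powLaw n (deriv (deriv f) s)) with hgdef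
  have hODE : ∀ t ∈ Ici (0:ℝ),
      deriv g t = m * (deriv f t) ^ 2 - α * f t * deriv (deriv f) t := by
    intro t ht
    have := hf5 t ht
    linarith
  have hgc : ContinuousOn g (Ici 0) :=
    fun t ht => (hf4 t ht).continuousAt.continuousWithinAt
  have hsign : ∀ t : ℝ, 0 < g t ↔ 0 < deriv (deriv f) t := fun t => powLaw_pos_iff
  -- Lemma A: once g ≤ 0, it stays ≤ 0
  have lemA : ∀ c : ℝ, 0 ≤ c → g c ≤ 0 → ∀ d : ℝ, c ≤ d → g d ≤ 0 := by
    intro c hc hgc0 d hcd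
    by_contra hgd
    push_neg at hgd
    have hcd' : c < d := lt_of_le_of_ne hcd (by rintro rfl; linarith)
    set S : Set ℝ := Icc c d ∩ g ⁻¹' (Iic 0) with hS
    have hSne : S.Nonempty := ⟨c, ⟨le_refl c, hcd⟩, hgc0⟩
    have hSclosed : IsClosed S := by
      apply ContinuousOn.preimage_isClosed_of_isClosed
        (hgc.mono (fun x hx => le_trans hc hx.1)) isClosed_Icc isClosed_Iic
    have hScpt : IsCompact S :=
      isCompact_Icc.of_isClosed_subset hSclosed (fun x hx => hx.1)
    obtain ⟨e, heS, hemax⟩ : ∃ e, e ∈ S ∧ ∀ t ∈ S, t ≤ e :=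
      ⟨sSup S, hScpt.sSup_mem hSne, fun t ht => le_csSup hScpt.bddAbove ht⟩
    have hec : c ≤ e := heS.1.1
    have hed : e ≤ d := heS.1.2
    have hge0 : g e ≤ 0 := heS.2
    have hlt : ∀ t : ℝ, e < t → t ≤ d → 0 < g t := by
      intro t het htd
      by_contra h
      push_neg at h
      have htS : t ∈ S := ⟨⟨le_trans hec het.le, htd⟩, h⟩
      have := hemax t htS
      linarith
    have hanti : StrictAntiOn g (Icc e d) := by
      apply strictAntiOn_of_deriv_neg (convex_Icc e d)
      · exact hgc.mono (fun x hx => le_trans (le_trans hc hec) hx.1)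
      · intro x hx
        rw [interior_Icc] at hx
        have hx0 : (0:ℝ) ≤ x := le_trans (le_trans hc hec) hx.1.le
        have hgx : 0 < g x := hlt x hx.1 hx.2.le
        have hfx : 0 < deriv (deriv f) x := (hsign x).mp hgx
        rw [hODE x hx0]
        have hfpos := hpos x hx0
        have h1 : m * (deriv f x) ^ 2 ≤ 0 :=
          mul_nonpos_of_nonpos_of_nonneg hm₂.le (sq_nonneg _)
        have h2 : 0 < α * f x * deriv (deriv f) x := mul_pos (mul_pos hα hfpos) hfx
        linarith
    have hed' : e < d := lt_of_le_of_ne hed (by rintro rfl; linarith)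
    have hcontra : g d < g e :=
      hanti (left_mem_Icc.mpr hed) (right_mem_Icc.mpr hed) hed'
    linarith
  -- Step 2: g ≤ 0 somewhere
  have step2 : ∃ c : ℝ, 0 ≤ c ∧ g c ≤ 0 := by
    by_contra h
    push_neg at h
    have hf'' : ∀ t : ℝ, 0 ≤ t → 0 < deriv (deriv f) t :=
      fun t ht => (hsign t).mp (h t ht)
    have hmono : StrictMonoOn (deriv f) (Ici 0) := by
      apply strictMonoOn_of_deriv_pos (convex_Ici 0)
      · exact fun t ht => (hf2 t ht).continuousAt.continuousWithinAt
      · intro x hx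
        rw [interior_Ici] at hx
        exact hf'' x hx.le
    have hneg : ∀ t : ℝ, 0 ≤ t → deriv f t < 0 := by
      intro t ht
      have h1 : deriv f t < deriv f (t + 1) :=
        hmono ht (by simp only [mem_Ici]; linarith) (by linarith)
      have h2 : deriv f (t + 1) ≤ 0 := by
        apply ge_of_tendsto hd0
        filter_upwards [Filter.eventually_ge_atTop (t + 1)] with s hs
        exact hmono.monotoneOn (by simp only [mem_Ici]; linarith)
          (by simp only [mem_Ici]; linarith) hs
      linarith
    have hfanti : AntitoneOn f (Ici 0) := by
      apply antitoneOn_of_deriv_nonpos (convex_Ici 0)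
      · exact fun t ht => (hf1 t ht).continuousAt.continuousWithinAt
      · intro x hx
        rw [interior_Ici] at hx
        exact (hf1 x (mem_Ici.mpr hx.le)).differentiableWithinAt
      · intro x hx
        rw [interior_Ici] at hx
        exact (hneg x hx.le).le
    obtain ⟨s, hs1, hs2⟩ := ((hinf.eventually_gt_atTop (f 0)).and
      (Filter.eventually_ge_atTop (0:ℝ))).exists
    have := hfanti (self_mem_Ici) hs2 hs2
    linarith
  obtain ⟨c, hc0, hgc0⟩ := step2
  have hgle : ∀ t : ℝ, c ≤ t → g t ≤ 0 := lemA c hc0 hgc0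
  have hf''le : ∀ t : ℝ, c ≤ t → deriv (deriv f) t ≤ 0 := by
    intro t ht
    by_contra h
    push_neg at h
    have := (hsign t).mpr h
    linarith [hgle t ht]
  -- f' is antitone on [c, ∞)
  have hf'anti : AntitoneOn (deriv f) (Ici c) := by
    apply antitoneOn_of_deriv_nonpos (convex_Ici c)
    · exact fun t ht => (hf2 t (le_trans hc0 ht)).continuousAt.continuousWithinAt
    · intro x hx
      rw [interior_Ici] at hx
      exact (hf2 x (le_trans hc0 hx.le)).differentiableWithinAt
    · intro x hx
      rw [interior_Ici] at hx
      exact hf''le x hx.le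
  -- f' ≥ 0 on [c, ∞)
  have hf'nonneg : ∀ t : ℝ, c ≤ t → 0 ≤ deriv f t := by
    intro t ht
    apply le_of_tendsto hd0
    filter_upwards [Filter.eventually_ge_atTop t] with s hs
    exact hf'anti ht (le_trans ht hs) hs
  -- f' > 0 on [c, ∞)
  have hf'pos : ∀ t : ℝ, c ≤ t → 0 < deriv f t := by
    intro t ht
    rcases lt_or_eq_of_le (hf'nonneg t ht) with h | h
    · exact h
    -- deriv f t = 0; then f' ≤ 0 on [t, ∞), so f is antitone there, contradiction
    exfalso
    have hle : ∀ s : ℝ, t ≤ s → deriv f s ≤ 0 := by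
      intro s hs
      have := hf'anti (mem_Ici.mpr ht) (mem_Ici.mpr (le_trans ht hs)) hs
      linarith
    have hfanti : AntitoneOn f (Ici t) := by
      apply antitoneOn_of_deriv_nonpos (convex_Ici t)
      · exact fun s hs =>
          (hf1 s (le_trans (le_trans hc0 ht) hs)).continuousAt.continuousWithinAt
      · intro x hx
        rw [interior_Ici] at hx
        exact (hf1 x (le_trans (le_trans hc0 ht) hx.le)).differentiableWithinAt
      · intro x hx
        rw [interior_Ici] at hx
        exact hle x hx.le
    obtain ⟨s, hs1, hs2⟩ := ((hinf.eventually_gt_atTop (f t)).and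
      (Filter.eventually_ge_atTop t)).exists
    have := hfanti (self_mem_Ici) hs2 hs2
    linarith
  refine ⟨c, hc0, fun t ht => ⟨hf'pos t ht.le, ?_⟩⟩
  -- f'' < 0 strictly
  by_contra h
  push_neg at h
  have hz : deriv (deriv f) t = 0 := le_antisymm (hf''le t ht.le) h
  have hgt0 : g t = 0 := by
    simp only [hgdef]
    rw [hz, powLaw_zero]
  have hmax : IsLocalMax g t := by
    filter_upwards [Ioi_mem_nhds ht] with s hs
    rw [hgt0]
    exact hgle s (le_of_lt hs)
  have hderiv0 := hmax.deriv_eq_zero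
  rw [hODE t (le_trans hc0 ht.le)] at hderiv0
  rw [hz] at hderiv0
  have hfp := hf'pos t ht.le
  have hsq : 0 < deriv f t ^ 2 := pow_pos hfp 2
  nlinarith
end

section
/- Assume α > 0. Let f : ℝ → ℝ solve the power-law ODE on [0,∞) with f(t) → ∞ and f''(t) → 0 as t → ∞. Then there exists t₀ ≥ 0 such that |f''(t₀)|^{n−1}·f''(t₀) + α·f(t₀)·f'(t₀) > 0. -/
open Real Set Filter Topology

theorem stmt_14 (n α m : ℝ) (hn : 1 < n) (hα : 0 < α)
    (f : ℝ → ℝ)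
    (hf : SolvesPowerLawODE n α m f (Set.Ici 0))
    (hinf : Filter.Tendsto f Filter.atTop Filter.atTop)
    (hd0' : Filter.Tendsto (deriv (deriv f)) Filter.atTop (nhds 0)) :
    ∃ t₀ : ℝ, 0 ≤ t₀ ∧
      0 < powLaw n (deriv (deriv f) t₀) + α * f t₀ * deriv f t₀ := by
  by_contra hcon
  push_neg at hcon
  obtain ⟨hfd, hfd', _, _, _⟩ := hf
  obtain ⟨T, hT⟩ := Filter.eventually_atTop.mp (hinf.eventually_ge_atTop 1)
  set T' : ℝ := max T 0 with hT'def
  have hT'0 : (0:ℝ) ≤ T' := le_max_right _ _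
  have hn0 : (0:ℝ) < n := lt_trans one_pos hn
  set p : ℝ := (n - 1) / n with hpdef
  have hp : 0 < p := div_pos (by linarith) hn0
  set k : ℝ := p * α ^ ((1:ℝ)/n) with hkdef
  have hk : 0 < k := mul_pos hp (Real.rpow_pos_of_pos hα _)
  set hfun : ℝ → ℝ := fun t => max (deriv f t) 0 ^ p with hfundef
  have hfun_nonneg : ∀ t, 0 ≤ hfun t := fun t => Real.rpow_nonneg (le_max_right _ _) _
  set M : ℝ := hfun T' with hMdef
  -- key pointwise second-derivative bound
  have key2 : ∀ t, T' ≤ t → 0 < deriv f t →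
      deriv (deriv f) t ≤ -(α ^ ((1:ℝ)/n) * deriv f t ^ ((1:ℝ)/n)) := by
    intro t ht hft
    have ht0 : (0:ℝ) ≤ t := le_trans hT'0 ht
    have hf1 : 1 ≤ f t := hT t (le_trans (le_max_left T 0) ht)
    have hG := hcon t ht0
    set c := deriv (deriv f) t with hcdef
    have hb : 0 < α * f t * deriv f t := mul_pos (mul_pos hα (by linarith : (0:ℝ) < f t)) hft
    have h1 : |c| ^ (n-1) * c ≤ -(α * f t * deriv f t) := by
      unfold powLaw at hG; linarith
    have hcneg : c < 0 := by
      by_contra hcc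
      push_neg at hcc
      have : 0 ≤ |c| ^ (n-1) * c := mul_nonneg (Real.rpow_nonneg (abs_nonneg c) _) hcc
      linarith
    have hnc : 0 < -c := neg_pos.mpr hcneg
    rw [abs_of_neg hcneg] at h1
    have h2 : α * f t * deriv f t ≤ (-c) ^ n := by
      have he : (-c) ^ (n - 1 + 1) = (-c) ^ (n-1) * (-c) := Real.rpow_add_one hnc.ne' (n-1)
      have hn1 : n - 1 + 1 = n := by ring
      rw [hn1] at he
      nlinarith [he]
    have h3 : (α * deriv f t) ^ ((1:ℝ)/n) ≤ -c := by
      have l1 : (α * deriv f t) ^ ((1:ℝ)/n) ≤ ((-c) ^ n) ^ ((1:ℝ)/n) := by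
        apply Real.rpow_le_rpow (by positivity) ?_ (by positivity)
        nlinarith [mul_le_mul_of_nonneg_left hf1 (mul_pos hα hft).le]
      have l2 : ((-c) ^ n) ^ ((1:ℝ)/n) = -c := by
        rw [← Real.rpow_mul hnc.le, mul_one_div, div_self hn0.ne', Real.rpow_one]
      linarith
    rw [Real.mul_rpow hα.le hft.le] at h3
    linarith
  -- key finite-time estimate
  have key : ∀ u, T' < u → 0 < deriv f u → u ≤ T' + M / k := by
    intro u hTu hfu
    set S : Set ℝ := {t : ℝ | t ∈ Icc T' u ∧ deriv f t ≤ 0} with hSdef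
    set A : Set ℝ := insert T' S with hAdef
    have hAsub : A ⊆ Icc T' u :=
      insert_subset_iff.mpr ⟨⟨le_refl T', hTu.le⟩, fun t ht => ht.1⟩
    have hAne : A.Nonempty := ⟨T', mem_insert _ _⟩
    have hScl : IsClosed S := by
      have hcd : ContinuousOn (deriv f) (Icc T' u) := fun t ht =>
        ((hfd' t (le_trans hT'0 ht.1)).continuousAt).continuousWithinAt
      have h0 : IsClosed (Icc T' u ∩ deriv f ⁻¹' Iic (0:ℝ)) :=
        hcd.preimage_isClosed_of_isClosed isClosed_Icc isClosed_Iic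
      convert h0 using 1
      rfl
    have hAcl : IsClosed A := by
      rw [hAdef, Set.insert_eq]
      exact isClosed_singleton.union hScl
    have hAcomp : IsCompact A := isCompact_Icc.of_isClosed_subset hAcl hAsub
    set a : ℝ := sSup A with hadef
    have haA : a ∈ A := hAcomp.sSup_mem hAne
    have haIcc : a ∈ Icc T' u := hAsub haA
    have hau : a < u := by
      rcases lt_or_eq_of_le haIcc.2 with h | h
      · exact h
      · exfalso
        rcases mem_insert_iff.mp haA with h' | h'
        · rw [h] at h'; exact absurd h' (ne_of_gt hTu)
        · rw [h] at h'; exact absurd hfu (not_lt.mpr h'.2)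
    have hpos : ∀ t ∈ Ioc a u, 0 < deriv f t := by
      intro t ht
      by_contra hle
      push_neg at hle
      have htA : t ∈ A := mem_insert_iff.mpr
        (Or.inr ⟨⟨le_trans haIcc.1 ht.1.le, ht.2⟩, hle⟩)
      have := le_csSup hAcomp.bddAbove htA
      linarith [ht.1]
    set φ : ℝ → ℝ := fun t => hfun t + k * t with hφdef
    have hder : ∀ x ∈ Ioo a u,
        HasDerivAt φ (deriv (deriv f) x * p * deriv f x ^ (p-1) + k * 1) x ∧
          deriv (deriv f) x * p * deriv f x ^ (p-1) + k * 1 ≤ 0 := by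
      intro x hx
      have hxT : T' ≤ x := le_trans haIcc.1 hx.1.le
      have hx0 : x ∈ Ici (0:ℝ) := le_trans hT'0 hxT
      have hfx : 0 < deriv f x := hpos x ⟨hx.1, hx.2.le⟩
      have hd2 : HasDerivAt (deriv f) (deriv (deriv f) x) x := (hfd' x hx0).hasDerivAt
      have hrp : HasDerivAt (fun s => deriv f s ^ p)
          (deriv (deriv f) x * p * deriv f x ^ (p-1)) x :=
        hd2.rpow_const (Or.inl hfx.ne')
      have hev : ∀ᶠ s in 𝓝 x, 0 < deriv f s :=
        ((hfd' x hx0).continuousAt).eventually (eventually_gt_nhds hfx)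
      have heq : hfun =ᶠ[𝓝 x] (fun s => deriv f s ^ p) :=
        hev.mono (fun s hs => by simp [hfundef, max_eq_left hs.le])
      have hH : HasDerivAt hfun (deriv (deriv f) x * p * deriv f x ^ (p-1)) x :=
        HasDerivAt.congr_of_eventuallyEq hrp heq
      constructor
      · exact hH.add ((hasDerivAt_id x).const_mul k)
      · have hc5 := key2 x hxT hfx
        have hA1 : deriv f x ^ ((1:ℝ)/n) * deriv f x ^ (p-1) = 1 := by
          rw [← Real.rpow_add hfx]
          have : (1:ℝ)/n + (p - 1) = 0 := by rw [hpdef]; field_simp; ring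
          rw [this, Real.rpow_zero]
        have h5 : deriv (deriv f) x * deriv f x ^ (p-1) ≤ -(α ^ ((1:ℝ)/n)) := by
          have := mul_le_mul_of_nonneg_right hc5 (Real.rpow_nonneg hfx.le (p-1))
          calc deriv (deriv f) x * deriv f x ^ (p-1)
              ≤ -(α ^ ((1:ℝ)/n) * deriv f x ^ ((1:ℝ)/n)) * deriv f x ^ (p-1) := this
            _ = -(α ^ ((1:ℝ)/n)) * (deriv f x ^ ((1:ℝ)/n) * deriv f x ^ (p-1)) := by ring
            _ = -(α ^ ((1:ℝ)/n)) := by rw [hA1, mul_one]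
        have h6 := mul_le_mul_of_nonneg_left h5 hp.le
        rw [hkdef]
        nlinarith [h6]
    have hanti : AntitoneOn φ (Icc a u) := by
      apply antitoneOn_of_deriv_nonpos (convex_Icc a u)
      · have hcd : ContinuousOn (deriv f) (Icc a u) := fun t ht =>
          ((hfd' t (le_trans hT'0 (le_trans haIcc.1 ht.1))).continuousAt).continuousWithinAt
        have h1 : ContinuousOn hfun (Icc a u) :=
          (hcd.sup continuousOn_const).rpow_const (fun t _ => Or.inr hp.le)
        exact h1.add ((continuous_const.mul continuous_id).continuousOn)
      · rw [interior_Icc]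
        exact fun x hx => ((hder x hx).1).differentiableAt.differentiableWithinAt
      · rw [interior_Icc]
        intro x hx
        rw [(hder x hx).1.deriv]
        exact (hder x hx).2
    have hφu : φ u ≤ φ a := hanti ⟨le_refl a, hau.le⟩ ⟨hau.le, le_refl u⟩ hau.le
    have hfu_pos : 0 < hfun u :=
      Real.rpow_pos_of_pos (lt_max_iff.mpr (Or.inl hfu)) _
    rcases mem_insert_iff.mp haA with h | h
    · -- a = T'
      have h1 : hfun u + k * u ≤ M + k * T' := by
        have : φ a = M + k * T' := by rw [h]
        rw [this] at hφu
        exact hφu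
      have hcalc : k * (T' + M / k) = k * T' + M := by field_simp
      have h2 : k * u ≤ k * (T' + M / k) := by
        rw [hcalc]
        nlinarith [hfun_nonneg u]
      exact le_of_mul_le_mul_left h2 hk
    · -- deriv f a ≤ 0
      exfalso
      have ha0 : hfun a = 0 := by
        simp [hfundef, max_eq_right h.2, Real.zero_rpow hp.ne']
      have : hfun u + k * u ≤ 0 + k * a := by
        have : φ a = 0 + k * a := by simp [hφdef, ha0]
        rw [this] at hφu
        exact hφu
      nlinarith [mul_lt_mul_of_pos_left hau hk]
  -- conclude
  have hMk : 0 ≤ M / k := div_nonneg (hfun_nonneg T') hk.le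
  obtain ⟨B, hBdef⟩ : ∃ B : ℝ, B = T' + M / k + 1 := ⟨_, rfl⟩
  have hB0 : (0:ℝ) ≤ B := by rw [hBdef]; linarith
  have hnonpos : ∀ x, B ≤ x → deriv f x ≤ 0 := by
    intro x hx
    by_contra hpx
    push_neg at hpx
    rw [hBdef] at hx
    have := key x (by linarith) hpx
    linarith
  have hanti : AntitoneOn f (Ici B) := by
    apply antitoneOn_of_deriv_nonpos (convex_Ici B)
    · exact fun t ht => ((hfd t (le_trans hB0 ht)).continuousAt).continuousWithinAt
    · rw [interior_Ici]
      exact fun t ht => (hfd t (le_trans hB0 (le_of_lt ht))).differentiableWithinAt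
    · rw [interior_Ici]
      exact fun t ht => hnonpos t (le_of_lt ht)
  obtain ⟨x, hx⟩ := Filter.eventually_atTop.mp (hinf.eventually_ge_atTop (f B + 1))
  have h1 : f B + 1 ≤ f (max x B) := hx (max x B) (le_max_left _ _)
  have h2 : f (max x B) ≤ f B := hanti self_mem_Ici (le_max_right x B) (le_max_right x B)
  linarith
end

section
/- Assume α > 0 and −2α < m < 0. Let f : ℝ → ℝ solve the power-law ODE on [0,∞) with f(t) > 0 for all t ≥ 0, f(t) → ∞, f'(t) → 0 and f''(t) → 0 as t → ∞. Then the product f(t)·f'(t) has a limit in [0,∞] as t → ∞, and this limit equals ∞ if m + α > 0, is a finite strictly positive number if m + α = 0, and equals 0 if m + α < 0. -/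
open Real Set Filter Topology

lemma powLaw_of_neg {n x : ℝ} (hn : 1 < n) (hx : x < 0) : powLaw n x = -((-x) ^ n) := by
  unfold powLaw
  rw [abs_of_neg hx]
  have h1 : (-x : ℝ) ^ (n - 1) * (-x) ^ (1:ℝ) = (-x) ^ (n - 1 + 1) :=
    (Real.rpow_add (by linarith) _ _).symm
  rw [Real.rpow_one] at h1
  have h2 : n - 1 + 1 = n := by ring
  rw [h2] at h1
  nlinarith [h1]

lemma powLaw_lt_zero {n x : ℝ} (hn : 1 < n) : powLaw n x < 0 ↔ x < 0 := by
  constructor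
  · intro h
    by_contra hx
    push_neg at hx
    have : 0 ≤ powLaw n x :=
      mul_nonneg (Real.rpow_nonneg (abs_nonneg x) _) hx
    linarith
  · intro hx
    unfold powLaw
    exact mul_neg_of_pos_of_neg (Real.rpow_pos_of_pos (abs_pos.mpr hx.ne) _) hx

lemma tendsto_powLaw_zero {n : ℝ} (hn : 1 < n) {u : ℝ → ℝ}
    (hu : Tendsto u atTop (𝓝 0)) :
    Tendsto (fun t => powLaw n (u t)) atTop (𝓝 0) := by
  have hc : ContinuousAt (fun x => powLaw n x) 0 := by
    have h1 : ContinuousAt (fun x : ℝ => |x| ^ (n - 1)) 0 := by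
      have := (Real.continuousAt_rpow_const (|(0:ℝ)|) (n-1) (Or.inr (by linarith)))
      exact this.comp (continuous_abs.continuousAt)
    exact h1.mul continuousAt_id
  have h0 : powLaw n 0 = 0 := by simp [powLaw]
  have := hc.tendsto.comp hu
  rwa [h0] at this

lemma lemA {n α : ℝ} (hn : 1 < n) (hα : 0 < α) {f : ℝ → ℝ} {T : ℝ} (hT : 0 ≤ T)
    (hf1 : ∀ t ∈ Ici (0:ℝ), DifferentiableAt ℝ f t)
    (hf2 : ∀ t ∈ Ici (0:ℝ), DifferentiableAt ℝ (deriv f) t)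
    (hpos : ∀ t : ℝ, 0 ≤ t → 0 < f t)
    (hinf : Tendsto f atTop atTop)
    (hH : ∀ t, T ≤ t → powLaw n (deriv (deriv f) t) + α * (f t * deriv f t) ≤ 0) :
    False := by
  have hn0 : (0:ℝ) < n := by linarith
  -- Step a : deriv f > 0 on [T, ∞)
  have hfp : ∀ t, T ≤ t → 0 < deriv f t := by
    by_contra hcon
    push_neg at hcon
    obtain ⟨t0, ht0, ht0'⟩ := hcon
    -- claim : deriv f ≤ 0 on [t0, ∞)
    have claim : ∀ t, t0 ≤ t → deriv f t ≤ 0 := by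
      intro u hu
      by_contra hu'
      push_neg at hu'
      have ht0u : t0 < u := by
        rcases eq_or_lt_of_le hu with h | h
        · exfalso; rw [h] at ht0'; linarith
        · exact h
      set S : Set ℝ := {t | t ∈ Icc t0 u ∧ deriv f t ≤ 0} with hS
      have hne : t0 ∈ S := ⟨⟨le_rfl, ht0u.le⟩, ht0'⟩
      have hbdd : BddAbove S := ⟨u, fun x hx => hx.1.2⟩
      set s := sSup S with hs
      have hsIcc : s ∈ Icc t0 u :=
        ⟨le_csSup hbdd hne, csSup_le ⟨t0, hne⟩ (fun x hx => hx.1.2)⟩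
      have hs0 : (0:ℝ) ≤ s := le_trans hT (le_trans ht0 hsIcc.1)
      have hclos : s ∈ closure S := csSup_mem_closure ⟨t0, hne⟩ hbdd
      have hfs : deriv f s ≤ 0 := by
        haveI : (𝓝[S] s).NeBot := mem_closure_iff_nhdsWithin_neBot.mp hclos
        have hcA : ContinuousWithinAt (deriv f) S s :=
          ((hf2 s hs0).continuousAt).continuousWithinAt
        exact le_of_tendsto hcA (eventually_nhdsWithin_of_forall (fun x hx => hx.2))
      have hsu : s < u := lt_of_le_of_ne hsIcc.2 (fun h => by rw [h] at hfs; linarith)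
      have hIoc : ∀ t ∈ Ioc s u, 0 < deriv f t := by
        intro t ht
        by_contra htn
        push_neg at htn
        have : t ∈ S := ⟨⟨le_trans hsIcc.1 ht.1.le, ht.2⟩, htn⟩
        have := le_csSup hbdd this
        linarith [ht.1]
      have hpp : ∀ t ∈ Ioo s u, deriv (deriv f) t < 0 := by
        intro t ht
        have hTt : T ≤ t := le_trans (le_trans ht0 hsIcc.1) ht.1.le
        have hft : 0 < f t := hpos t (le_trans hT hTt)
        have hft' : 0 < deriv f t := hIoc t ⟨ht.1, ht.2.le⟩
        have := hH t hTt
        have : powLaw n (deriv (deriv f) t) < 0 := by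
          nlinarith [mul_pos hα (mul_pos hft hft')]
        exact (powLaw_lt_zero hn).mp this
      have hanti : StrictAntiOn (deriv f) (Icc s u) := by
        apply strictAntiOn_of_deriv_neg (convex_Icc s u)
        · intro x hx
          have hx0 : (0:ℝ) ≤ x := le_trans hs0 hx.1
          exact ((hf2 x hx0).continuousAt).continuousWithinAt
        · intro x hx
          rw [interior_Icc] at hx
          exact hpp x hx
      have := hanti ⟨le_rfl, hsu.le⟩ ⟨hsu.le, le_rfl⟩ hsu
      linarith
    -- f antitone on [t0, ∞), contradicting f → ∞
    have hanti : AntitoneOn f (Ici t0) := by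
      apply antitoneOn_of_deriv_nonpos (convex_Ici t0)
      · intro x hx
        exact ((hf1 x (le_trans hT (le_trans ht0 hx))).continuousAt).continuousWithinAt
      · intro x hx
        rw [interior_Ici] at hx
        exact (hf1 x (le_trans hT (le_trans ht0 hx.le))).differentiableWithinAt
      · intro x hx
        rw [interior_Ici] at hx
        exact claim x hx.le
    obtain ⟨t, ht, ht'⟩ := ((hinf.eventually_gt_atTop (f t0)).and (eventually_ge_atTop t0)).exists
    have := hanti (self_mem_Ici) ht' ht'
    linarith
  -- Step b : f'' < 0 on [T, ∞)
  have hfpp : ∀ t, T ≤ t → deriv (deriv f) t < 0 := by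
    intro t ht
    have hft : 0 < f t := hpos t (le_trans hT ht)
    have hft' : 0 < deriv f t := hfp t ht
    have := hH t ht
    have : powLaw n (deriv (deriv f) t) < 0 := by
      nlinarith [mul_pos hα (mul_pos hft hft')]
    exact (powLaw_lt_zero hn).mp this
  -- Step c : key inequality
  have hkey : ∀ t, T ≤ t →
      (deriv f t) ^ (1 - 1/n) * deriv (deriv f) t
        + α ^ (1/n) * (f t) ^ (1/n) * deriv f t ≤ 0 := by
    intro t ht
    set p := deriv f t with hp
    set q := deriv (deriv f) t with hq
    set F := f t with hF
    have hppos : 0 < p := hfp t ht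
    have hFpos : 0 < F := hpos t (le_trans hT ht)
    have hqneg : q < 0 := hfpp t ht
    have h1 : α * (F * p) ≤ (-q) ^ n := by
      have := hH t ht
      rw [powLaw_of_neg hn hqneg] at this
      linarith
    have hαFp : 0 < α * (F * p) := by positivity
    have h2 : (α * (F * p)) ^ (1/n) ≤ ((-q) ^ n) ^ (1/n) :=
      Real.rpow_le_rpow hαFp.le h1 (by positivity)
    have h3 : ((-q:ℝ) ^ n) ^ (1/n) = -q := by
      rw [← Real.rpow_mul (by linarith : (0:ℝ) ≤ -q), mul_one_div,
        div_self (ne_of_gt hn0), Real.rpow_one]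
    rw [h3] at h2
    have h4 : (α * (F * p)) ^ (1/n) = α ^ (1/n) * (F ^ (1/n) * p ^ (1/n)) := by
      rw [Real.mul_rpow hα.le (by positivity), Real.mul_rpow hFpos.le hppos.le]
    have h5 : p ^ (1 - 1/n) * p ^ (1/n) = p := by
      rw [← Real.rpow_add hppos, sub_add_cancel, Real.rpow_one]
    have h6 : p ^ (1 - 1/n) * q ≤ -(p ^ (1 - 1/n) * (α ^ (1/n) * (F ^ (1/n) * p ^ (1/n)))) := by
      have hple : q ≤ -(α ^ (1/n) * (F ^ (1/n) * p ^ (1/n))) := by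
        rw [← h4]; linarith
      have hnn : (0:ℝ) ≤ p ^ (1 - 1/n) := Real.rpow_nonneg hppos.le _
      nlinarith [mul_le_mul_of_nonneg_left hple hnn]
    have h7 : p ^ (1 - 1/n) * (α ^ (1/n) * (F ^ (1/n) * p ^ (1/n)))
        = α ^ (1/n) * F ^ (1/n) * p := by
      rw [show p ^ (1 - 1/n) * (α ^ (1/n) * (F ^ (1/n) * p ^ (1/n)))
          = α ^ (1/n) * F ^ (1/n) * (p ^ (1 - 1/n) * p ^ (1/n)) from by ring, h5]
    linarith [h6, h7.le, h7.ge]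
  -- Step d : Lyapunov function
  set β : ℝ := 2 - 1/n with hβ
  set γ : ℝ := 1 + 1/n with hγ
  have hninv : 1/n < 1 := by
    rw [div_lt_one hn0]; linarith
  have hninv0 : 0 < 1/n := by positivity
  have hβ1 : (1:ℝ) ≤ β := by rw [hβ]; linarith
  have hγ1 : (1:ℝ) ≤ γ := by rw [hγ]; linarith
  have hβpos : (0:ℝ) < β := by linarith
  have hγpos : (0:ℝ) < γ := by linarith
  set c0 : ℝ := β * α ^ (1/n) / γ with hc0
  have hαn : (0:ℝ) < α ^ (1/n) := Real.rpow_pos_of_pos hα _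
  have hc0pos : 0 < c0 := by rw [hc0]; positivity
  set Φ : ℝ → ℝ := fun t => (deriv f t) ^ β + c0 * (f t) ^ γ with hΦdef
  set D : ℝ → ℝ := fun t =>
    deriv (deriv f) t * β * (deriv f t) ^ (β - 1) + c0 * (deriv f t * γ * (f t) ^ (γ - 1)) with hDdef
  have hΦ : ∀ t ∈ Ici (0:ℝ), HasDerivAt Φ (D t) t := by
    intro t ht
    have h1 : HasDerivAt (fun s => (deriv f s) ^ β)
        (deriv (deriv f) t * β * (deriv f t) ^ (β - 1)) t :=
      ((hf2 t ht).hasDerivAt).rpow_const (Or.inr hβ1)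
    have h2 : HasDerivAt (fun s => c0 * (f s) ^ γ)
        (c0 * (deriv f t * γ * (f t) ^ (γ - 1))) t :=
      (((hf1 t ht).hasDerivAt).rpow_const (Or.inr hγ1)).const_mul c0
    exact h1.add h2
  have hc0γ : c0 * γ = β * α ^ (1/n) := by
    rw [hc0]; field_simp
  have hDle : ∀ t, T ≤ t → D t ≤ 0 := by
    intro t ht
    have hk := hkey t ht
    have hDeq : D t = β * ((deriv f t) ^ (1 - 1/n) * deriv (deriv f) t
        + α ^ (1/n) * (f t) ^ (1/n) * deriv f t) := by
      rw [hDdef]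
      simp only []
      rw [show β - 1 = 1 - 1/n from by rw [hβ]; ring, show γ - 1 = 1/n from by rw [hγ]; ring]
      linear_combination (deriv f t * (f t) ^ (1/n)) * hc0γ
    rw [hDeq]
    exact mul_nonpos_of_nonneg_of_nonpos hβpos.le hk
  have hΦanti : AntitoneOn Φ (Ici T) := by
    apply antitoneOn_of_deriv_nonpos (convex_Ici T)
    · intro x hx
      exact ((hΦ x (le_trans hT hx)).continuousAt).continuousWithinAt
    · intro x hx
      rw [interior_Ici] at hx
      exact (hΦ x (le_trans hT hx.le)).differentiableAt.differentiableWithinAt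
    · intro x hx
      rw [interior_Ici] at hx
      rw [(hΦ x (le_trans hT hx.le)).deriv]
      exact hDle x hx.le
  have hbound : ∀ t, T ≤ t → (f t) ^ γ ≤ Φ T / c0 := by
    intro t ht
    have h1 : Φ t ≤ Φ T := hΦanti self_mem_Ici ht ht
    have h2 : (0:ℝ) ≤ (deriv f t) ^ β := Real.rpow_nonneg (hfp t ht).le _
    have hΦT : Φ T = deriv f T ^ β + c0 * f T ^ γ := rfl
    have h3 : (0:ℝ) ≤ (deriv f T) ^ β := Real.rpow_nonneg (hfp T le_rfl).le _
    have hΦt : Φ t = deriv f t ^ β + c0 * f t ^ γ := rfl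
    rw [hΦt, hΦT] at h1
    have h4 : c0 * (f t) ^ γ ≤ Φ T := by rw [hΦT]; linarith
    rw [le_div_iff₀ hc0pos]; linarith
  have htend : Tendsto (fun t => (f t) ^ γ) atTop atTop :=
    (tendsto_rpow_atTop hγpos).comp hinf
  obtain ⟨t, h1, h2⟩ := ((htend.eventually_gt_atTop (Φ T / c0)).and (eventually_ge_atTop T)).exists
  linarith [hbound t h2]


lemma lemB {k : ℝ} (hk : k ≠ 0) {f H : ℝ → ℝ} {δ M T : ℝ} (hδ : 0 < δ) (hT : 0 ≤ T)
    (hH : ∀ t ∈ Ici (0:ℝ), HasDerivAt H (k * (deriv f t)^2) t)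
    (hf1 : ∀ t ∈ Ici (0:ℝ), DifferentiableAt ℝ f t)
    (hf2 : ∀ t ∈ Ici (0:ℝ), DifferentiableAt ℝ (deriv f) t)
    (hfpos : ∀ t : ℝ, 0 ≤ t → 0 < f t)
    (hlb : ∀ t, T ≤ t → δ ≤ f t * deriv f t)
    (hub : ∀ t, T ≤ t → f t * deriv f t ≤ M) :
    Tendsto (fun t => (H t - H T) / k) atTop atTop := by
  have hδM : δ ≤ M := le_trans (hlb T le_rfl) (hub T le_rfl)
  have hM : 0 < M := lt_of_lt_of_le hδ hδM
  set A : ℝ := f T ^ 2 with hA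
  have hApos : 0 < A := pow_pos (hfpos T hT) 2
  -- f² growth bound
  have hfsq : ∀ t, T ≤ t → f t ^ 2 ≤ A + 2*M*(t - T) := by
    intro t ht
    set ψ : ℝ → ℝ := fun s => A + 2*M*(s - T) - f s ^ 2 with hψ
    have hψd : ∀ s ∈ Ici T, HasDerivAt ψ (2*M - 2 * f s * deriv f s) s := by
      intro s hs
      have h1 : HasDerivAt (fun u : ℝ => A + 2*M*(u - T)) (2*M) s := by
        have : HasDerivAt (fun u : ℝ => 2*M*u + (A - 2*M*T)) (2*M) s := by
          simpa using ((hasDerivAt_id s).const_mul (2*M)).add_const (A - 2*M*T)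
        convert this using 2 with u
        ring
      have h2 : HasDerivAt (fun u => f u ^ 2) (2 * f s * deriv f s) s := by
        have := ((hf1 s (le_trans hT hs)).hasDerivAt).fun_pow 2
        simpa [mul_comm, mul_assoc, mul_left_comm] using this
      exact h1.sub h2
    have hmono : MonotoneOn ψ (Ici T) := by
      apply monotoneOn_of_deriv_nonneg (convex_Ici T)
      · intro x hx; exact ((hψd x hx).continuousAt).continuousWithinAt
      · intro x hx; rw [interior_Ici] at hx
        exact (hψd x (mem_Ici.mpr hx.le)).differentiableAt.differentiableWithinAt
      · intro x hx; rw [interior_Ici] at hx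
        rw [(hψd x (mem_Ici.mpr hx.le)).deriv]
        linarith [hub x hx.le]
    have := hmono self_mem_Ici ht ht
    have hψT : ψ T = 0 := by simp [hψ, hA]
    have hψt : ψ t = A + 2*M*(t - T) - f t ^ 2 := rfl
    rw [hψT, hψt] at this
    linarith
  -- pointwise lower bound on f'²
  have hlow : ∀ s, T ≤ s → δ^2 / (A + 2*M*(s - T)) ≤ (deriv f s)^2 := by
    intro s hs
    have h1 : δ^2 ≤ (f s * deriv f s)^2 := pow_le_pow_left₀ hδ.le (hlb s hs) 2
    have h2 : (f s * deriv f s)^2 = f s ^2 * (deriv f s)^2 := by ring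
    have h3 : 0 < A + 2*M*(s - T) := by nlinarith
    rw [div_le_iff₀ h3]
    nlinarith [mul_le_mul_of_nonneg_right (hfsq s hs) (sq_nonneg (deriv f s))]
  -- FTC for H
  have hHint : ∀ t, T ≤ t → H t - H T = k * ∫ s in T..t, (deriv f s)^2 := by
    intro t ht
    have huIcc : uIcc T t = Icc T t := uIcc_of_le ht
    have hcont : ContinuousOn (fun s => k * (deriv f s)^2) (uIcc T t) := by
      rw [huIcc]
      intro x hx
      exact (continuousWithinAt_const.mul
        ((((hf2 x (le_trans hT hx.1)).continuousAt).continuousWithinAt).pow 2))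
    have := intervalIntegral.integral_eq_sub_of_hasDerivAt
      (f := H) (f' := fun s => k * (deriv f s)^2)
      (fun x hx => hH x (by rw [huIcc] at hx; exact le_trans hT hx.1))
      (hcont.intervalIntegrable)
    rw [intervalIntegral.integral_const_mul] at this
    linarith [this]
  -- FTC for the comparison integrand
  set G : ℝ → ℝ := fun s => δ^2/(2*M) * Real.log (A + 2*M*(s - T)) with hG
  have hGd : ∀ s, T ≤ s → HasDerivAt G (δ^2 / (A + 2*M*(s - T))) s := by
    intro s hs
    have hden : 0 < A + 2*M*(s - T) := by nlinarith
    have h1 : HasDerivAt (fun u : ℝ => A + 2*M*(u - T)) (2*M) s := by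
      have : HasDerivAt (fun u : ℝ => 2*M*u + (A - 2*M*T)) (2*M) s := by
        simpa using ((hasDerivAt_id s).const_mul (2*M)).add_const (A - 2*M*T)
      convert this using 2 with u
      ring
    have h2 := (h1.log (ne_of_gt hden)).const_mul (δ^2/(2*M))
    refine h2.congr_deriv ?_
    field_simp
  have hGint : ∀ t, T ≤ t → G t - G T ≤ ∫ s in T..t, (deriv f s)^2 := by
    intro t ht
    have huIcc : uIcc T t = Icc T t := uIcc_of_le ht
    have hcontG : ContinuousOn (fun s => δ^2 / (A + 2*M*(s - T))) (uIcc T t) := by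
      rw [huIcc]
      intro x hx
      apply ContinuousWithinAt.div continuousWithinAt_const
      · exact (continuous_const.add (continuous_const.mul
          (continuous_id.sub continuous_const))).continuousWithinAt
      · nlinarith [hx.1]
    have heq : ∫ s in T..t, δ^2 / (A + 2*M*(s - T)) = G t - G T :=
      intervalIntegral.integral_eq_sub_of_hasDerivAt
        (fun x hx => hGd x (by rw [huIcc] at hx; exact hx.1))
        (hcontG.intervalIntegrable)
    rw [← heq]
    apply intervalIntegral.integral_mono_on ht (hcontG.intervalIntegrable)
    · apply ContinuousOn.intervalIntegrable
      rw [huIcc]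
      intro x hx
      exact (((hf2 x (le_trans hT hx.1)).continuousAt).continuousWithinAt).pow 2
    · intro x hx
      exact hlow x hx.1
  -- conclude
  have hGtop : Tendsto (fun t => G t - G T) atTop atTop := by
    have h0 : Tendsto (fun t : ℝ => t - T) atTop atTop :=
      (tendsto_atTop_add_const_right _ (-T) tendsto_id).congr (fun x => by simp only [id_eq]; ring)
    have h0' : Tendsto (fun t : ℝ => 2*M*(t - T)) atTop atTop :=
      h0.const_mul_atTop (by linarith)
    have h1 : Tendsto (fun t : ℝ => A + 2*M*(t - T)) atTop atTop :=
      tendsto_atTop_add_const_left _ A h0'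
    have h2 : Tendsto (fun t => Real.log (A + 2*M*(t - T))) atTop atTop :=
      Real.tendsto_log_atTop.comp h1
    have h3 : Tendsto G atTop atTop :=
      h2.const_mul_atTop (show (0:ℝ) < δ^2/(2*M) by positivity)
    exact (tendsto_atTop_add_const_right _ (-(G T)) h3).congr (fun x => by ring)
  apply tendsto_atTop_mono' _ _ hGtop
  filter_upwards [eventually_ge_atTop T] with t ht
  rw [hHint t ht, mul_comm, mul_div_assoc, div_self hk, mul_one]
  exact hGint t ht


theorem stmt_15 (n α m : ℝ) (hn : 1 < n) (hα : 0 < α) (hm₁ : -2 * α < m) (hm₂ : m < 0)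
    (f : ℝ → ℝ)
    (hf : SolvesPowerLawODE n α m f (Set.Ici 0))
    (hpos : ∀ t : ℝ, 0 ≤ t → 0 < f t)
    (hinf : Filter.Tendsto f Filter.atTop Filter.atTop)
    (hd0 : Filter.Tendsto (deriv f) Filter.atTop (nhds 0))
    (hd0' : Filter.Tendsto (deriv (deriv f)) Filter.atTop (nhds 0)) :
    ∃ L : EReal, 0 ≤ L ∧
      Filter.Tendsto (fun t => ((f t * deriv f t : ℝ) : EReal)) Filter.atTop (nhds L) ∧
      (0 < m + α → L = ⊤) ∧
      (m + α = 0 → ∃ l : ℝ, 0 < l ∧ L = (l : EReal)) ∧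
      (m + α < 0 → L = 0) := by
  obtain ⟨h1, h2, h3, h4, h5⟩ := hf
  set g : ℝ → ℝ := fun t => powLaw n (deriv (deriv f) t) with hgdef
  set H : ℝ → ℝ := fun t => g t + α * (f t * deriv f t) with hHdef
  have hHt : ∀ t, H t = powLaw n (deriv (deriv f) t) + α * (f t * deriv f t) := fun t => rfl
  have hHd : ∀ t ∈ Ici (0:ℝ), HasDerivAt H ((m + α) * (deriv f t)^2) t := by
    intro t ht
    have hd := (h4 t ht).hasDerivAt
    have heq := h5 t ht
    have he : deriv (fun s => powLaw n (deriv (deriv f) s)) t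
        = m * (deriv f t)^2 - α * f t * deriv (deriv f) t := by linarith
    rw [he] at hd
    have hff : HasDerivAt (fun s => α * (f s * deriv f s))
        (α * (deriv f t * deriv f t + f t * deriv (deriv f) t)) t :=
      ((h1 t ht).hasDerivAt.mul (h2 t ht).hasDerivAt).const_mul α
    have := hd.add hff
    rw [hHdef, hgdef]
    refine this.congr_deriv ?_
    ring
  have hg0 : Tendsto g atTop (𝓝 0) := tendsto_powLaw_zero hn hd0'
  have hident : ∀ t, f t * deriv f t = (H t - g t) / α := by
    intro t
    rw [hHt t]
    have hg : g t = powLaw n (deriv (deriv f) t) := rfl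
    rw [hg]
    field_simp
    ring
  have hff_of : ∀ c : ℝ, Tendsto H atTop (𝓝 c) →
      Tendsto (fun t => f t * deriv f t) atTop (𝓝 (c / α)) := by
    intro c hc
    have := (hc.sub hg0).div_const α
    rw [sub_zero] at this
    exact this.congr (fun t => (hident t).symm)
  rcases lt_trichotomy (m + α) 0 with hk | hk | hk
  · -- m + α < 0 : limit is 0
    have hanti : AntitoneOn H (Ici 0) := by
      apply antitoneOn_of_deriv_nonpos (convex_Ici 0)
      · intro x hx; exact ((hHd x hx).continuousAt).continuousWithinAt
      · intro x hx; rw [interior_Ici] at hx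
        exact (hHd x (mem_Ici.mpr hx.le)).differentiableAt.differentiableWithinAt
      · intro x hx; rw [interior_Ici] at hx
        rw [(hHd x (mem_Ici.mpr hx.le)).deriv]
        exact mul_nonpos_of_nonpos_of_nonneg hk.le (sq_nonneg _)
    have hH0 : ∀ t, 0 ≤ t → 0 ≤ H t := by
      intro t0 ht0
      by_contra hneg
      push_neg at hneg
      refine lemA hn hα ht0 h1 h2 hpos hinf ?_
      intro t ht
      have h' := hanti ht0 (le_trans ht0 ht) ht
      rw [← hHt t]
      linarith
    set Hm : ℝ → ℝ := fun t => H (max t 0) with hHmdef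
    have hHm : Antitone Hm :=
      fun a b hab => hanti (le_max_right a 0) (le_max_right b 0) (max_le_max hab le_rfl)
    have hbdd : BddBelow (range Hm) := by
      refine ⟨0, ?_⟩
      rintro y ⟨t, rfl⟩
      exact hH0 _ (le_max_right _ _)
    have hlim : Tendsto Hm atTop (𝓝 (⨅ t, Hm t)) := tendsto_atTop_ciInf hHm hbdd
    set c : ℝ := ⨅ t, Hm t with hcdef
    have hHc : Tendsto H atTop (𝓝 c) := by
      apply hlim.congr'
      filter_upwards [eventually_ge_atTop (0:ℝ)] with t ht
      simp only [hHmdef, max_eq_left ht]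
    have hc0 : 0 ≤ c := le_ciInf (fun t => hH0 _ (le_max_right _ _))
    have hceq : c = 0 := by
      by_contra hcne
      have hcpos : 0 < c := lt_of_le_of_ne hc0 (Ne.symm hcne)
      have hffc := hff_of c hHc
      have hlo : c/(2*α) < c/α := by
        rw [div_lt_div_iff₀ (by positivity) hα]; nlinarith
      have hev : ∀ᶠ t in atTop, f t * deriv f t ∈ Icc (c/(2*α)) (c/α + 1) :=
        hffc (Icc_mem_nhds hlo (lt_add_one _))
      obtain ⟨T0, hT0⟩ := eventually_atTop.mp hev
      set T' : ℝ := max T0 0 with hT'def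
      have hT' : (0:ℝ) ≤ T' := le_max_right _ _
      have hlb : ∀ t, T' ≤ t → c/(2*α) ≤ f t * deriv f t :=
        fun t ht => (hT0 t (le_trans (le_max_left _ _) ht)).1
      have hub : ∀ t, T' ≤ t → f t * deriv f t ≤ c/α + 1 :=
        fun t ht => (hT0 t (le_trans (le_max_left _ _) ht)).2
      have hB := lemB (ne_of_lt hk) (show (0:ℝ) < c/(2*α) by positivity) hT'
        hHd h1 h2 hpos hlb hub
      have hHbot : Tendsto H atTop atBot := by
        have ha := hB.const_mul_atTop_of_neg hk
        have hb : Tendsto (fun t => H t - H T') atTop atBot :=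
          ha.congr (fun t => by rw [← mul_div_assoc, mul_div_cancel_left₀ _ (ne_of_lt hk)])
        have := tendsto_atBot_add_const_right atTop (H T') hb
        exact this.congr (fun t => by ring)
      obtain ⟨t, hta, htb⟩ :=
        ((hHbot.eventually_le_atBot (-1)).and (eventually_ge_atTop (0:ℝ))).exists
      linarith [hH0 t htb]
    refine ⟨(0 : EReal), le_refl _, ?_, ?_, ?_, ?_⟩
    · have hffc : Tendsto (fun t => f t * deriv f t) atTop (𝓝 0) := by
        have := hff_of c hHc
        rw [hceq] at this
        simpa using this
      rw [show (0:EReal) = ((0:ℝ) : EReal) from rfl]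
      exact EReal.tendsto_coe.mpr hffc
    · intro h'; exfalso; linarith
    · intro h'; exfalso; linarith
    · intro _; rfl
  · -- m + α = 0 : positive finite limit
    have hd0deriv : ∀ x ∈ Ici (0:ℝ), HasDerivAt H 0 x := by
      intro x hx
      have := hHd x hx
      rwa [hk, zero_mul] at this
    have hconst : ∀ t, 0 ≤ t → H t = H 0 := by
      have hmono : MonotoneOn H (Ici 0) := by
        apply monotoneOn_of_deriv_nonneg (convex_Ici 0)
        · intro x hx; exact ((hd0deriv x hx).continuousAt).continuousWithinAt
        · intro x hx; rw [interior_Ici] at hx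
          exact (hd0deriv x (mem_Ici.mpr hx.le)).differentiableAt.differentiableWithinAt
        · intro x hx; rw [interior_Ici] at hx
          rw [(hd0deriv x (mem_Ici.mpr hx.le)).deriv]
      have hanti : AntitoneOn H (Ici 0) := by
        apply antitoneOn_of_deriv_nonpos (convex_Ici 0)
        · intro x hx; exact ((hd0deriv x hx).continuousAt).continuousWithinAt
        · intro x hx; rw [interior_Ici] at hx
          exact (hd0deriv x (mem_Ici.mpr hx.le)).differentiableAt.differentiableWithinAt
        · intro x hx; rw [interior_Ici] at hx
          rw [(hd0deriv x (mem_Ici.mpr hx.le)).deriv]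
      intro t ht
      exact le_antisymm (hanti self_mem_Ici ht ht) (hmono self_mem_Ici ht ht)
    have hcpos : 0 < H 0 := by
      by_contra hle
      push_neg at hle
      refine lemA hn hα (le_refl (0:ℝ)) h1 h2 hpos hinf ?_
      intro t ht
      rw [← hHt t, hconst t ht]
      exact hle
    have hHc : Tendsto H atTop (𝓝 (H 0)) := by
      apply tendsto_const_nhds.congr'
      filter_upwards [eventually_ge_atTop (0:ℝ)] with t ht
      exact (hconst t ht).symm
    have hffc := hff_of (H 0) hHc
    have hlpos : 0 < H 0 / α := div_pos hcpos hα
    refine ⟨((H 0 / α : ℝ) : EReal), ?_, ?_, ?_, ?_, ?_⟩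
    · exact_mod_cast hlpos.le
    · exact EReal.tendsto_coe.mpr hffc
    · intro h'; exfalso; linarith
    · intro _; exact ⟨H 0 / α, hlpos, rfl⟩
    · intro h'; exfalso; linarith
  · -- 0 < m + α : limit is ⊤
    have hmono : MonotoneOn H (Ici 0) := by
      apply monotoneOn_of_deriv_nonneg (convex_Ici 0)
      · intro x hx; exact ((hHd x hx).continuousAt).continuousWithinAt
      · intro x hx; rw [interior_Ici] at hx
        exact (hHd x (mem_Ici.mpr hx.le)).differentiableAt.differentiableWithinAt
      · intro x hx; rw [interior_Ici] at hx
        rw [(hHd x (mem_Ici.mpr hx.le)).deriv]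
        exact mul_nonneg hk.le (sq_nonneg _)
    set Hm : ℝ → ℝ := fun t => H (max t 0) with hHmdef
    have hHm : Monotone Hm :=
      fun a b hab => hmono (le_max_right a 0) (le_max_right b 0) (max_le_max hab le_rfl)
    have hnbdd : ¬ BddAbove (range Hm) := by
      intro hbdd
      have hlim : Tendsto Hm atTop (𝓝 (⨆ t, Hm t)) := tendsto_atTop_ciSup hHm hbdd
      set c : ℝ := ⨆ t, Hm t with hcdef
      have hHc : Tendsto H atTop (𝓝 c) := by
        apply hlim.congr'
        filter_upwards [eventually_ge_atTop (0:ℝ)] with t ht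
        simp only [hHmdef, max_eq_left ht]
      have hHle : ∀ t, 0 ≤ t → H t ≤ c := by
        intro t ht
        have := le_ciSup hbdd t
        simpa only [hHmdef, max_eq_left ht] using this
      rcases le_or_gt c 0 with hcle | hcpos
      · refine lemA hn hα (le_refl (0:ℝ)) h1 h2 hpos hinf ?_
        intro t ht
        rw [← hHt t]
        linarith [hHle t ht]
      · have hffc := hff_of c hHc
        have hlo : c/(2*α) < c/α := by
          rw [div_lt_div_iff₀ (by positivity) hα]; nlinarith
        have hev : ∀ᶠ t in atTop, f t * deriv f t ∈ Icc (c/(2*α)) (c/α + 1) :=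
          hffc (Icc_mem_nhds hlo (lt_add_one _))
        obtain ⟨T0, hT0⟩ := eventually_atTop.mp hev
        set T' : ℝ := max T0 0 with hT'def
        have hT' : (0:ℝ) ≤ T' := le_max_right _ _
        have hlb : ∀ t, T' ≤ t → c/(2*α) ≤ f t * deriv f t :=
          fun t ht => (hT0 t (le_trans (le_max_left _ _) ht)).1
        have hub : ∀ t, T' ≤ t → f t * deriv f t ≤ c/α + 1 :=
          fun t ht => (hT0 t (le_trans (le_max_left _ _) ht)).2
        have hB := lemB (ne_of_gt hk) (show (0:ℝ) < c/(2*α) by positivity) hT'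
          hHd h1 h2 hpos hlb hub
        have hHtop : Tendsto H atTop atTop := by
          have ha := hB.const_mul_atTop hk
          have hb : Tendsto (fun t => H t - H T') atTop atTop :=
            ha.congr (fun t => by rw [← mul_div_assoc, mul_div_cancel_left₀ _ (ne_of_gt hk)])
          have := tendsto_atTop_add_const_right atTop (H T') hb
          exact this.congr (fun t => by ring)
        obtain ⟨t, hta, htb⟩ :=
          ((hHtop.eventually_ge_atTop (c + 1)).and (eventually_ge_atTop (0:ℝ))).exists
        linarith [hHle t htb]
    have hHtop : Tendsto H atTop atTop := by
      apply (tendsto_atTop_atTop_of_monotone' hHm hnbdd).congr'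
      filter_upwards [eventually_ge_atTop (0:ℝ)] with t ht
      simp only [hHmdef, max_eq_left ht]
    have hfftop : Tendsto (fun t => f t * deriv f t) atTop atTop := by
      have ha : Tendsto (fun t => H t + -(g t)) atTop atTop := hHtop.atTop_add hg0.neg
      have hb : Tendsto (fun t => (H t - g t) / α) atTop atTop :=
        (ha.congr (fun t => by ring)).atTop_div_const hα
      exact hb.congr (fun t => (hident t).symm)
    refine ⟨(⊤ : EReal), le_top, ?_, fun _ => rfl, ?_, ?_⟩
    · apply EReal.tendsto_nhds_top_iff_real.mpr
      intro x
      filter_upwards [hfftop.eventually_gt_atTop x] with t ht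
      exact_mod_cast ht
    · intro h'; exfalso; linarith
    · intro h'; exfalso; linarith
end
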